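/- arXiv:1506.08520 — 2 statements merged into one kernel-verified Lean document; each statement's English description precedes it below -/
import Mathlib

section
/- (Pohozaev identity, two-dimensional case.) In the static one-dimensional-surface setting (Q = [0,L₁]), one has ∫₀^{L₁} (G(η)ψ)(x)·x·∂ₓψ(x) dx = (L₁/2)∫₋ₕ^{η(L₁)} (∂_yϕ(L₁,y))² dy + (h/2)∫₀^{L₁} (∂ₓϕ(x,−h))² dx + (1/2)∫₀^{L₁} (η(x) − x·∂ₓη(x))·(V(x)² + B(x)² − 2B(x)·G(η)ψ(x)) dx. -/
open Real Set MeasureTheory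

noncomputable section

/-- `∂ₓϕ(x,y)` -/
def phX (ϕ : ℝ → ℝ → ℝ) (x y : ℝ) : ℝ := deriv (fun x' => ϕ x' y) x

/-- `∂_yϕ(x,y)` -/
def phY (ϕ : ℝ → ℝ → ℝ) (x y : ℝ) : ℝ := deriv (fun y' => ϕ x y') y

namespace PohozaevAux

lemma clm_smul₂ (T : ℝ × ℝ →L[ℝ] ℝ) (c : ℝ) : T (0, c) = c * T (0, 1) := by
  have h : ((0:ℝ), c) = c • ((0:ℝ), (1:ℝ)) := by simp
  rw [h, _root_.map_smul, smul_eq_mul]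

lemma clm_split (T : ℝ × ℝ →L[ℝ] ℝ) (c : ℝ) : T (1, c) = T (1, 0) + c * T (0, 1) := by
  have h : ((1:ℝ), c) = ((1:ℝ), (0:ℝ)) + c • ((0:ℝ), (1:ℝ)) := by simp
  rw [h, map_add, _root_.map_smul, smul_eq_mul]

lemma hasDerivAt_curry_fst {x y : ℝ} {g : ℝ × ℝ → ℝ} (hg : DifferentiableAt ℝ g (x, y)) :
    HasDerivAt (fun x' => g (x', y)) (fderiv ℝ g (x, y) (1, 0)) x := by
  have h2 : HasDerivAt (fun x' : ℝ => (x', y)) ((1:ℝ), (0:ℝ)) x :=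
    (hasDerivAt_id x).prodMk (hasDerivAt_const x y)
  exact hg.hasFDerivAt.comp_hasDerivAt x h2

lemma hasDerivAt_curry_snd {x y : ℝ} {g : ℝ × ℝ → ℝ} (hg : DifferentiableAt ℝ g (x, y)) :
    HasDerivAt (fun y' => g (x, y')) (fderiv ℝ g (x, y) (0, 1)) y := by
  have h2 : HasDerivAt (fun y' : ℝ => (x, y')) ((0:ℝ), (1:ℝ)) y :=
    (hasDerivAt_const y x).prodMk (hasDerivAt_id y)
  exact hg.hasFDerivAt.comp_hasDerivAt y h2

/-- Divergence theorem for a vector field `(f₁, f₂)` on the subgraph domain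
`{(x,y) | x ∈ [0,L₁], -h ≤ y ≤ η x}`, for divergence-free fields. -/
lemma flux (L₁ h : ℝ) (hL : 0 ≤ L₁) (η : ℝ → ℝ) (hη : ContDiff ℝ 1 η)
    (hηb : ∀ x ∈ Icc (0:ℝ) L₁, -h ≤ η x)
    (f₁ f₂ : ℝ × ℝ → ℝ) (hf₁ : ContDiff ℝ 1 f₁) (hf₂ : ContDiff ℝ 1 f₂)
    (hdiv : ∀ x ∈ Icc (0:ℝ) L₁, ∀ y ∈ Icc (-h) (η x),
      fderiv ℝ f₁ (x, y) (1, 0) + fderiv ℝ f₂ (x, y) (0, 1) = 0) :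
    (∫ y in (-h)..(η L₁), f₁ (L₁, y)) - (∫ y in (-h)..(η 0), f₁ (0, y))
      = ∫ x in (0:ℝ)..L₁,
          (deriv η x * f₁ (x, η x) - f₂ (x, η x) + f₂ (x, -h)) := by
  have hηd : Differentiable ℝ η := hη.differentiable one_ne_zero
  have hηc : Continuous η := hη.continuous
  have hηc' : Continuous (deriv η) := hη.continuous_deriv le_rfl
  have hf₁d : Differentiable ℝ f₁ := hf₁.differentiable one_ne_zero
  have hf₂d : Differentiable ℝ f₂ := hf₂.differentiable one_ne_zero
  have hf₁c : Continuous f₁ := hf₁.continuous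
  have hf₂c : Continuous f₂ := hf₂.continuous
  have hf₁' : Continuous (fderiv ℝ f₁) := hf₁.continuous_fderiv one_ne_zero
  set ℓ : ℝ → ℝ → ℝ := fun x t => -h + (η x + h) * t with hℓdef
  have e0 : ∀ x, ℓ x 0 = -h := fun x => by simp [hℓdef]
  have e1 : ∀ x, ℓ x 1 = η x := fun x => by simp [hℓdef]
  have hℓcont : Continuous fun p : ℝ × ℝ => ℓ p.1 p.2 := by
    simp only [hℓdef]; fun_prop
  have hℓt : ∀ x t, HasDerivAt (fun s => ℓ x s) (η x + h) t := by
    intro x t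
    simpa [hℓdef] using (((hasDerivAt_id t).const_mul (η x + h)).const_add (-h))
  have hℓx : ∀ x t, HasDerivAt (fun x' => ℓ x' t) (deriv η x * t) x := by
    intro x t
    simpa [hℓdef] using ((((hηd x).hasDerivAt.add_const h).mul_const t).const_add (-h))
  set D : ℝ → ℝ → ℝ := fun x t =>
    deriv η x * f₁ (x, ℓ x t) + (η x + h) * fderiv ℝ f₁ (x, ℓ x t) (1, deriv η x * t)
    with hDdef
  have hDcont : Continuous fun p : ℝ × ℝ => D p.1 p.2 := by
    simp only [hDdef]
    apply Continuous.add
    · exact (hηc'.comp continuous_fst).mul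
        (hf₁c.comp (continuous_fst.prodMk hℓcont))
    · exact ((hηc.comp continuous_fst).add continuous_const).mul
        ((hf₁'.comp (continuous_fst.prodMk hℓcont)).clm_apply
          (continuous_const.prodMk ((hηc'.comp continuous_fst).mul continuous_snd)))
  have hinner : ∀ x t, HasDerivAt (fun x' => (η x' + h) * f₁ (x', ℓ x' t)) (D x t) x := by
    intro x t
    have h2 : HasDerivAt (fun x' => ((x' : ℝ), ℓ x' t)) ((1:ℝ), deriv η x * t) x :=
      (hasDerivAt_id x).prodMk (hℓx x t)
    have h3 : HasDerivAt (fun x' => f₁ (x', ℓ x' t))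
        (fderiv ℝ f₁ (x, ℓ x t) (1, deriv η x * t)) x :=
      (hf₁d _).hasFDerivAt.comp_hasDerivAt x h2
    exact ((hηd x).hasDerivAt.add_const h).mul h3
  have hΦ : ∀ x₀ : ℝ, HasDerivAt (fun x => ∫ t in (0:ℝ)..1, (η x + h) * f₁ (x, ℓ x t))
      (∫ t in (0:ℝ)..1, D x₀ t) x₀ := by
    intro x₀
    obtain ⟨C, hC⟩ := ((isCompact_closedBall x₀ 1).prod
      (isCompact_Icc (a := (0:ℝ)) (b := 1))).exists_bound_of_continuousOn
      hDcont.continuousOn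
    have hmeas : ∀ x : ℝ, AEStronglyMeasurable (fun t => (η x + h) * f₁ (x, ℓ x t))
        (volume.restrict (Set.uIoc (0:ℝ) 1)) := by
      intro x
      exact (continuous_const.mul
        (hf₁c.comp (continuous_const.prodMk
          (hℓcont.comp (continuous_const.prodMk continuous_id))))).aestronglyMeasurable
    have hD'meas : AEStronglyMeasurable (fun t => D x₀ t) (volume.restrict (Set.uIoc (0:ℝ) 1)) :=
      (hDcont.comp (continuous_const.prodMk continuous_id)).aestronglyMeasurable
    have := (intervalIntegral.hasDerivAt_integral_of_dominated_loc_of_deriv_le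
      (F := fun x t => (η x + h) * f₁ (x, ℓ x t)) (F' := D) (x₀ := x₀)
      (a := 0) (b := 1) (bound := fun _ => C) (Metric.ball_mem_nhds x₀ one_pos)
      (Filter.Eventually.of_forall hmeas)
      ((continuous_const.mul
        (hf₁c.comp (continuous_const.prodMk
          (hℓcont.comp (continuous_const.prodMk continuous_id))))).intervalIntegrable _ _)
      hD'meas
      (Filter.Eventually.of_forall ?_)
      (intervalIntegrable_const)
      (Filter.Eventually.of_forall ?_))
    · exact this.2
    · intro t ht x hx
      have ht' : t ∈ Icc (0:ℝ) 1 := by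
        rw [Set.uIoc_of_le (by norm_num : (0:ℝ) ≤ 1)] at ht
        exact Ioc_subset_Icc_self ht
      exact hC (x, t) ⟨Metric.ball_subset_closedBall hx, ht'⟩
    · intro t ht x hx
      exact hinner x t
  have hval : ∀ x ∈ Icc (0:ℝ) L₁, (∫ t in (0:ℝ)..1, D x t)
      = deriv η x * f₁ (x, η x) - f₂ (x, η x) + f₂ (x, -h) := by
    intro x hx
    have hbx : -h ≤ η x := hηb x hx
    have hm : (0:ℝ) ≤ η x + h := by linarith
    have hcomp₁ : ∀ t, HasDerivAt (fun s => f₁ (x, ℓ x s))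
        (fderiv ℝ f₁ (x, ℓ x t) (0, η x + h)) t := by
      intro t
      exact (hf₁d _).hasFDerivAt.comp_hasDerivAt t
        ((hasDerivAt_const t x).prodMk (hℓt x t))
    have hcomp₂ : ∀ t, HasDerivAt (fun s => f₂ (x, ℓ x s))
        (fderiv ℝ f₂ (x, ℓ x t) (0, η x + h)) t := by
      intro t
      exact (hf₂d _).hasFDerivAt.comp_hasDerivAt t
        ((hasDerivAt_const t x).prodMk (hℓt x t))
    have hρ : ∀ t, HasDerivAt (fun s => s * f₁ (x, ℓ x s))
        (1 * f₁ (x, ℓ x t) + t * fderiv ℝ f₁ (x, ℓ x t) (0, η x + h)) t :=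
      fun t => (hasDerivAt_id t).mul (hcomp₁ t)
    have hcont₁ : Continuous fun t : ℝ => fderiv ℝ f₁ (x, ℓ x t) (0, η x + h) :=
      (hf₁'.comp (continuous_const.prodMk
        (hℓcont.comp (continuous_const.prodMk continuous_id)))).clm_apply continuous_const
    have hcont₂ : Continuous fun t : ℝ => fderiv ℝ f₂ (x, ℓ x t) (0, η x + h) :=
      ((hf₂.continuous_fderiv one_ne_zero).comp (continuous_const.prodMk
        (hℓcont.comp (continuous_const.prodMk continuous_id)))).clm_apply continuous_const
    have hcontf₁ℓ : Continuous fun t : ℝ => f₁ (x, ℓ x t) :=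
      hf₁c.comp (continuous_const.prodMk (hℓcont.comp (continuous_const.prodMk continuous_id)))
    have hintA : IntervalIntegrable
        (fun t : ℝ => 1 * f₁ (x, ℓ x t) + t * fderiv ℝ f₁ (x, ℓ x t) (0, η x + h))
        volume 0 1 := by
      apply Continuous.intervalIntegrable
      exact (continuous_const.mul hcontf₁ℓ).add (continuous_id'.mul hcont₁)
    have hintB : IntervalIntegrable
        (fun t : ℝ => fderiv ℝ f₂ (x, ℓ x t) (0, η x + h)) volume 0 1 :=
      hcont₂.intervalIntegrable _ _
    have hintC : IntervalIntegrable
        (fun t : ℝ => deriv η x *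
          (1 * f₁ (x, ℓ x t) + t * fderiv ℝ f₁ (x, ℓ x t) (0, η x + h))) volume 0 1 := by
      apply Continuous.intervalIntegrable
      exact continuous_const.mul ((continuous_const.mul hcontf₁ℓ).add (continuous_id'.mul hcont₁))
    have hI1 : (∫ t in (0:ℝ)..1,
        (1 * f₁ (x, ℓ x t) + t * fderiv ℝ f₁ (x, ℓ x t) (0, η x + h)))
        = f₁ (x, η x) := by
      have := intervalIntegral.integral_eq_sub_of_hasDerivAt (a := (0:ℝ)) (b := 1)
        (f := fun s => s * f₁ (x, ℓ x s)) (fun t _ => hρ t) hintA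
      simpa [e0 x, e1 x] using this
    have hI2 : (∫ t in (0:ℝ)..1, fderiv ℝ f₂ (x, ℓ x t) (0, η x + h))
        = f₂ (x, η x) - f₂ (x, -h) := by
      have := intervalIntegral.integral_eq_sub_of_hasDerivAt (a := (0:ℝ)) (b := 1)
        (f := fun s => f₂ (x, ℓ x s)) (fun t _ => hcomp₂ t) hintB
      simpa [e0 x, e1 x] using this
    have hpt : ∀ t ∈ Icc (0:ℝ) 1, D x t
        = deriv η x * (1 * f₁ (x, ℓ x t) + t * fderiv ℝ f₁ (x, ℓ x t) (0, η x + h))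
          - fderiv ℝ f₂ (x, ℓ x t) (0, η x + h) := by
      intro t ht
      have hy : ℓ x t ∈ Icc (-h) (η x) := by
        constructor
        · simp only [hℓdef]; nlinarith [ht.1, ht.2]
        · simp only [hℓdef]; nlinarith [ht.1, ht.2]
      have hdv := hdiv x hx (ℓ x t) hy
      simp only [hDdef]
      rw [clm_split (fderiv ℝ f₁ (x, ℓ x t)) (deriv η x * t),
        clm_smul₂ (fderiv ℝ f₁ (x, ℓ x t)) (η x + h),
        clm_smul₂ (fderiv ℝ f₂ (x, ℓ x t)) (η x + h)]
      linear_combination (η x + h) * hdv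
    calc (∫ t in (0:ℝ)..1, D x t)
        = ∫ t in (0:ℝ)..1,
            (deriv η x * (1 * f₁ (x, ℓ x t) + t * fderiv ℝ f₁ (x, ℓ x t) (0, η x + h))
              - fderiv ℝ f₂ (x, ℓ x t) (0, η x + h)) := by
          apply intervalIntegral.integral_congr
          intro t ht
          rw [Set.uIcc_of_le (by norm_num : (0:ℝ) ≤ 1)] at ht
          exact hpt t ht
      _ = deriv η x * (∫ t in (0:ℝ)..1,
            (1 * f₁ (x, ℓ x t) + t * fderiv ℝ f₁ (x, ℓ x t) (0, η x + h)))
          - ∫ t in (0:ℝ)..1, fderiv ℝ f₂ (x, ℓ x t) (0, η x + h) := by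
          rw [intervalIntegral.integral_sub hintC hintB,
            intervalIntegral.integral_const_mul]
      _ = deriv η x * f₁ (x, η x) - f₂ (x, η x) + f₂ (x, -h) := by
          rw [hI1, hI2]; ring
  have key := intervalIntegral.integral_eq_sub_of_hasDerivAt
    (f := fun x => ∫ t in (0:ℝ)..1, (η x + h) * f₁ (x, ℓ x t))
    (f' := fun x => deriv η x * f₁ (x, η x) - f₂ (x, η x) + f₂ (x, -h))
    (fun x hx => by
      rw [Set.uIcc_of_le hL] at hx
      simpa only [hval x hx] using hΦ x)
    (by
      apply Continuous.intervalIntegrable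
      exact ((hηc'.mul (hf₁c.comp (continuous_id'.prodMk hηc))).sub
        (hf₂c.comp (continuous_id'.prodMk hηc))).add
        (hf₂c.comp (continuous_id'.prodMk continuous_const)))
  have hsub : ∀ x : ℝ, (∫ t in (0:ℝ)..1, (η x + h) * f₁ (x, ℓ x t))
      = ∫ y in (-h)..(η x), f₁ (x, y) := by
    intro x
    have := intervalIntegral.integral_comp_smul_deriv (a := (0:ℝ)) (b := 1)
      (f := fun s => ℓ x s) (f' := fun _ => η x + h) (g := fun y => f₁ (x, y))
      (fun t _ => hℓt x t) continuousOn_const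
      (hf₁c.comp (continuous_const.prodMk continuous_id))
    simpa [e0 x, e1 x, smul_eq_mul, Function.comp] using this
  simp only [hsub] at key
  linarith [key]

/-- `∂ₓ` as a directional `fderiv`. -/
def Pd (f : ℝ × ℝ → ℝ) (z : ℝ × ℝ) : ℝ := fderiv ℝ f z (1, 0)

/-- `∂_y` as a directional `fderiv`. -/
def Qd (f : ℝ × ℝ → ℝ) (z : ℝ × ℝ) : ℝ := fderiv ℝ f z (0, 1)

def fF₁ (f : ℝ × ℝ → ℝ) (h : ℝ) (z : ℝ × ℝ) : ℝ :=
  z.1 * (Pd f z ^ 2 - Qd f z ^ 2) / 2 + (z.2 + h) * (Pd f z * Qd f z)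

def fF₂ (f : ℝ × ℝ → ℝ) (h : ℝ) (z : ℝ × ℝ) : ℝ :=
  z.1 * (Pd f z * Qd f z) + (z.2 + h) * (Qd f z ^ 2 - Pd f z ^ 2) / 2

def gG₁ (f : ℝ × ℝ → ℝ) (z : ℝ × ℝ) : ℝ := -(Pd f z * Qd f z)

def gG₂ (f : ℝ × ℝ → ℝ) (z : ℝ × ℝ) : ℝ := (Pd f z ^ 2 - Qd f z ^ 2) / 2

lemma main_aux (L₁ h : ℝ) (hL : 0 < L₁) (hh : 0 < h)
    (η : ℝ → ℝ) (f : ℝ × ℝ → ℝ)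
    (hη : ContDiff ℝ 2 η) (hf : ContDiff ℝ 2 f)
    (hηb : ∀ x ∈ Icc (0:ℝ) L₁, -h ≤ η x)
    (hlap : ∀ x ∈ Icc (0:ℝ) L₁, ∀ y ∈ Icc (-h) (η x),
      deriv (fun x' => Pd f (x', y)) x + deriv (fun y' => Qd f (x, y')) y = 0)
    (hbc0 : ∀ y ∈ Icc (-h) (η 0), Pd f (0, y) = 0)
    (hbcL : ∀ y ∈ Icc (-h) (η L₁), Pd f (L₁, y) = 0)
    (hbot : ∀ x ∈ Icc (0:ℝ) L₁, Qd f (x, -h) = 0) :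
    (∫ x in (0:ℝ)..L₁, (Qd f (x, η x) - deriv η x * Pd f (x, η x))
        * (x * (Pd f (x, η x) + deriv η x * Qd f (x, η x))))
      = L₁ / 2 * (∫ y in (-h)..(η L₁), Qd f (L₁, y) ^ 2)
        + h / 2 * (∫ x in (0:ℝ)..L₁, Pd f (x, -h) ^ 2)
        + 1 / 2 * ∫ x in (0:ℝ)..L₁, (η x - x * deriv η x)
            * (Pd f (x, η x) ^ 2 + Qd f (x, η x) ^ 2
                - 2 * Qd f (x, η x) * (Qd f (x, η x) - deriv η x * Pd f (x, η x))) := by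
  have hη1 : ContDiff ℝ 1 η := hη.of_le one_le_two
  have hηd : Differentiable ℝ η := hη1.differentiable one_ne_zero
  have hηc : Continuous η := hη1.continuous
  have hηc' : Continuous (deriv η) := hη.continuous_deriv one_le_two
  have hfd : Differentiable ℝ f := hf.differentiable two_ne_zero
  have hf' : ContDiff ℝ 1 (fderiv ℝ f) := hf.fderiv_right (m := 1) (by norm_num)
  have hfd' : Differentiable ℝ (fderiv ℝ f) := hf'.differentiable one_ne_zero
  have hP1 : ContDiff ℝ 1 (Pd f) := by
    unfold Pd; exact hf'.clm_apply contDiff_const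
  have hQ1 : ContDiff ℝ 1 (Qd f) := by
    unfold Qd; exact hf'.clm_apply contDiff_const
  have hPdiff := hP1.differentiable one_ne_zero
  have hQdiff := hQ1.differentiable one_ne_zero
  have hPc : Continuous (Pd f) := hP1.continuous
  have hQc : Continuous (Qd f) := hQ1.continuous
  -- Schwarz symmetry
  have hschz : ∀ z : ℝ × ℝ, fderiv ℝ (Pd f) z (0, 1) = fderiv ℝ (Qd f) z (1, 0) := by
    intro z
    have hsec : ∀ v w, fderiv ℝ (fderiv ℝ f) z v w = fderiv ℝ (fderiv ℝ f) z w v :=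
      fun v w => second_derivative_symmetric (fun y => (hfd y).hasFDerivAt)
        ((hfd' z).hasFDerivAt) v w
    have hP : ∀ w, fderiv ℝ (Pd f) z w = fderiv ℝ (fderiv ℝ f) z w ((1:ℝ), (0:ℝ)) := by
      intro w
      have hd : fderiv ℝ (Pd f) z
          = (fderiv ℝ f z).comp (fderiv ℝ (fun _ : ℝ × ℝ => ((1:ℝ), (0:ℝ))) z)
            + (fderiv ℝ (fderiv ℝ f) z).flip ((1:ℝ), (0:ℝ)) :=
        fderiv_clm_apply (hfd' z) (differentiableAt_const _)
      rw [hd]; simp [fderiv_const]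
    have hQ : ∀ w, fderiv ℝ (Qd f) z w = fderiv ℝ (fderiv ℝ f) z w ((0:ℝ), (1:ℝ)) := by
      intro w
      have hd : fderiv ℝ (Qd f) z
          = (fderiv ℝ f z).comp (fderiv ℝ (fun _ : ℝ × ℝ => ((0:ℝ), (1:ℝ))) z)
            + (fderiv ℝ (fderiv ℝ f) z).flip ((0:ℝ), (1:ℝ)) :=
        fderiv_clm_apply (hfd' z) (differentiableAt_const _)
      rw [hd]; simp [fderiv_const]
    rw [hP, hQ, hsec]
  -- Laplace equation in fderiv form
  have hlapz : ∀ x ∈ Icc (0:ℝ) L₁, ∀ y ∈ Icc (-h) (η x),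
      fderiv ℝ (Pd f) (x, y) (1, 0) + fderiv ℝ (Qd f) (x, y) (0, 1) = 0 := by
    intro x hx y hy
    have h1 := (hasDerivAt_curry_fst (g := Pd f) (hPdiff (x, y))).deriv
    have h2 := (hasDerivAt_curry_snd (g := Qd f) (hQdiff (x, y))).deriv
    rw [← h1, ← h2]
    exact hlap x hx y hy
  -- smoothness of the vector fields
  have hF₁1 : ContDiff ℝ 1 (fF₁ f h) := by
    unfold fF₁
    exact ((contDiff_fst.mul ((hP1.pow 2).sub (hQ1.pow 2))).div_const 2).add
      ((contDiff_snd.add contDiff_const).mul (hP1.mul hQ1))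
  have hF₂1 : ContDiff ℝ 1 (fF₂ f h) := by
    unfold fF₂
    exact (contDiff_fst.mul (hP1.mul hQ1)).add
      (((contDiff_snd.add contDiff_const).mul ((hQ1.pow 2).sub (hP1.pow 2))).div_const 2)
  have hG₁1 : ContDiff ℝ 1 (gG₁ f) := by
    unfold gG₁; exact (hP1.mul hQ1).neg
  have hG₂1 : ContDiff ℝ 1 (gG₂ f) := by
    unfold gG₂; exact ((hP1.pow 2).sub (hQ1.pow 2)).div_const 2
  have hF₁d := hF₁1.differentiable one_ne_zero
  have hF₂d := hF₂1.differentiable one_ne_zero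
  have hG₁d := hG₁1.differentiable one_ne_zero
  have hG₂d := hG₂1.differentiable one_ne_zero
  -- divergence-free conditions
  have divF : ∀ x ∈ Icc (0:ℝ) L₁, ∀ y ∈ Icc (-h) (η x),
      fderiv ℝ (fF₁ f h) (x, y) (1, 0) + fderiv ℝ (fF₂ f h) (x, y) (0, 1) = 0 := by
    intro x hx y hy
    have hlz := hlapz x hx y hy
    have hsz := hschz (x, y)
    have hPx : HasDerivAt (fun x' => Pd f (x', y)) (fderiv ℝ (Pd f) (x, y) (1, 0)) x :=
      hasDerivAt_curry_fst (hPdiff _)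
    have hQx : HasDerivAt (fun x' => Qd f (x', y)) (fderiv ℝ (Qd f) (x, y) (1, 0)) x :=
      hasDerivAt_curry_fst (hQdiff _)
    have hPy : HasDerivAt (fun y' => Pd f (x, y')) (fderiv ℝ (Pd f) (x, y) (0, 1)) y :=
      hasDerivAt_curry_snd (hPdiff _)
    have hQy : HasDerivAt (fun y' => Qd f (x, y')) (fderiv ℝ (Qd f) (x, y) (0, 1)) y :=
      hasDerivAt_curry_snd (hQdiff _)
    have hcur1 : HasDerivAt (fun x' => fF₁ f h (x', y))
        ((1 * (Pd f (x, y) ^ 2 - Qd f (x, y) ^ 2)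
          + x * ((2:ℕ) * Pd f (x, y) ^ (2 - 1) * fderiv ℝ (Pd f) (x, y) (1, 0)
              - (2:ℕ) * Qd f (x, y) ^ (2 - 1) * fderiv ℝ (Qd f) (x, y) (1, 0))) / 2
          + (y + h) * (fderiv ℝ (Pd f) (x, y) (1, 0) * Qd f (x, y)
              + Pd f (x, y) * fderiv ℝ (Qd f) (x, y) (1, 0))) x := by
      exact (((hasDerivAt_id x).mul ((hPx.pow 2).sub (hQx.pow 2))).div_const 2).add
        ((hPx.mul hQx).const_mul (y + h))
    have hcur2 : HasDerivAt (fun y' => fF₂ f h (x, y'))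
        (x * (fderiv ℝ (Pd f) (x, y) (0, 1) * Qd f (x, y)
            + Pd f (x, y) * fderiv ℝ (Qd f) (x, y) (0, 1))
          + (1 * (Qd f (x, y) ^ 2 - Pd f (x, y) ^ 2)
            + (y + h) * ((2:ℕ) * Qd f (x, y) ^ (2 - 1) * fderiv ℝ (Qd f) (x, y) (0, 1)
                - (2:ℕ) * Pd f (x, y) ^ (2 - 1) * fderiv ℝ (Pd f) (x, y) (0, 1))) / 2) y := by
      exact ((hPy.mul hQy).const_mul x).add
        ((((hasDerivAt_id y).add_const h).mul ((hQy.pow 2).sub (hPy.pow 2))).div_const 2)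
    have e₁ := (hasDerivAt_curry_fst (hF₁d (x, y))).unique hcur1
    have e₂ := (hasDerivAt_curry_snd (hF₂d (x, y))).unique hcur2
    rw [e₁, e₂]
    push_cast
    ring_nf
    linear_combination (x * Pd f (x, y) + (y + h) * Qd f (x, y)) * hlz
      + (x * Qd f (x, y) - (y + h) * Pd f (x, y)) * hsz
  have divG : ∀ x ∈ Icc (0:ℝ) L₁, ∀ y ∈ Icc (-h) (η x),
      fderiv ℝ (gG₁ f) (x, y) (1, 0) + fderiv ℝ (gG₂ f) (x, y) (0, 1) = 0 := by
    intro x hx y hy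
    have hlz := hlapz x hx y hy
    have hsz := hschz (x, y)
    have hPx : HasDerivAt (fun x' => Pd f (x', y)) (fderiv ℝ (Pd f) (x, y) (1, 0)) x :=
      hasDerivAt_curry_fst (hPdiff _)
    have hQx : HasDerivAt (fun x' => Qd f (x', y)) (fderiv ℝ (Qd f) (x, y) (1, 0)) x :=
      hasDerivAt_curry_fst (hQdiff _)
    have hPy : HasDerivAt (fun y' => Pd f (x, y')) (fderiv ℝ (Pd f) (x, y) (0, 1)) y :=
      hasDerivAt_curry_snd (hPdiff _)
    have hQy : HasDerivAt (fun y' => Qd f (x, y')) (fderiv ℝ (Qd f) (x, y) (0, 1)) y :=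
      hasDerivAt_curry_snd (hQdiff _)
    have hcur1 : HasDerivAt (fun x' => gG₁ f (x', y))
        (-(fderiv ℝ (Pd f) (x, y) (1, 0) * Qd f (x, y)
            + Pd f (x, y) * fderiv ℝ (Qd f) (x, y) (1, 0))) x := (hPx.mul hQx).neg
    have hcur2 : HasDerivAt (fun y' => gG₂ f (x, y'))
        (((2:ℕ) * Pd f (x, y) ^ (2 - 1) * fderiv ℝ (Pd f) (x, y) (0, 1)
          - (2:ℕ) * Qd f (x, y) ^ (2 - 1) * fderiv ℝ (Qd f) (x, y) (0, 1)) / 2) y :=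
      ((hPy.pow 2).sub (hQy.pow 2)).div_const 2
    have e₁ := (hasDerivAt_curry_fst (hG₁d (x, y))).unique hcur1
    have e₂ := (hasDerivAt_curry_snd (hG₂d (x, y))).unique hcur2
    rw [e₁, e₂]
    push_cast
    linear_combination (-(Qd f (x, y))) * hlz + Pd f (x, y) * hsz
  -- the two flux identities
  have hfluxF := flux L₁ h hL.le η hη1 hηb (fF₁ f h) (fF₂ f h) hF₁1 hF₂1 divF
  have hfluxG := flux L₁ h hL.le η hη1 hηb (gG₁ f) (gG₂ f) hG₁1 hG₂1 divG
  have hbL : -h ≤ η L₁ := hηb L₁ ⟨hL.le, le_rfl⟩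
  have hb0 : -h ≤ η 0 := hηb 0 ⟨le_rfl, hL.le⟩
  -- boundary terms
  have eF_L : (∫ y in (-h)..(η L₁), fF₁ f h (L₁, y))
      = -(L₁ / 2) * ∫ y in (-h)..(η L₁), Qd f (L₁, y) ^ 2 := by
    rw [← intervalIntegral.integral_const_mul]
    apply intervalIntegral.integral_congr
    intro y hy
    rw [Set.uIcc_of_le hbL] at hy
    simp only [fF₁]
    rw [hbcL y hy]
    ring
  have eF_0 : (∫ y in (-h)..(η 0), fF₁ f h (0, y)) = 0 := by
    have heq : EqOn (fun y => fF₁ f h (0, y)) (fun _ => (0:ℝ)) (uIcc (-h) (η 0)) := by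
      intro y hy
      rw [Set.uIcc_of_le hb0] at hy
      simp only [fF₁]
      rw [hbc0 y hy]
      ring
    rw [intervalIntegral.integral_congr heq]
    simp
  have eG_L : (∫ y in (-h)..(η L₁), gG₁ f (L₁, y)) = 0 := by
    have heq : EqOn (fun y => gG₁ f (L₁, y)) (fun _ => (0:ℝ)) (uIcc (-h) (η L₁)) := by
      intro y hy
      rw [Set.uIcc_of_le hbL] at hy
      simp only [gG₁]
      rw [hbcL y hy]
      ring
    rw [intervalIntegral.integral_congr heq]
    simp
  have eG_0 : (∫ y in (-h)..(η 0), gG₁ f (0, y)) = 0 := by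
    have heq : EqOn (fun y => gG₁ f (0, y)) (fun _ => (0:ℝ)) (uIcc (-h) (η 0)) := by
      intro y hy
      rw [Set.uIcc_of_le hb0] at hy
      simp only [gG₁]
      rw [hbc0 y hy]
      ring
    rw [intervalIntegral.integral_congr heq]
    simp
  rw [eF_L, eF_0] at hfluxF
  rw [eG_L, eG_0] at hfluxG
  -- continuity facts for splitting the integral
  have hsurf : Continuous fun x : ℝ => (x, η x) := continuous_id'.prodMk hηc
  have hbotc : Continuous fun x : ℝ => ((x : ℝ), (-h : ℝ)) :=
    continuous_id'.prodMk continuous_const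
  have hcV : Continuous fun x => Pd f (x, η x) := hPc.comp hsurf
  have hcB : Continuous fun x => Qd f (x, η x) := hQc.comp hsurf
  have hcPb : Continuous fun x => Pd f (x, -h) := hPc.comp hbotc
  have hiA : IntervalIntegrable (fun x => h / 2 * Pd f (x, -h) ^ 2) volume 0 L₁ := by
    apply Continuous.intervalIntegrable
    exact continuous_const.mul (hcPb.pow 2)
  have hiB : IntervalIntegrable (fun x => 1 / 2 * ((η x - x * deriv η x)
      * (Pd f (x, η x) ^ 2 + Qd f (x, η x) ^ 2
          - 2 * Qd f (x, η x) * (Qd f (x, η x) - deriv η x * Pd f (x, η x))))) volume 0 L₁ := by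
    apply Continuous.intervalIntegrable
    exact continuous_const.mul ((hηc.sub (continuous_id'.mul hηc')).mul
      (((hcV.pow 2).add (hcB.pow 2)).sub ((continuous_const.mul hcB).mul
        (hcB.sub (hηc'.mul hcV)))))
  have hiC : IntervalIntegrable (fun x =>
      deriv η x * fF₁ f h (x, η x) - fF₂ f h (x, η x) + fF₂ f h (x, -h)) volume 0 L₁ := by
    apply Continuous.intervalIntegrable
    exact ((hηc'.mul (hF₁1.continuous.comp hsurf)).sub
      (hF₂1.continuous.comp hsurf)).add (hF₂1.continuous.comp hbotc)
  have hiD : IntervalIntegrable (fun x =>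
      h * (deriv η x * gG₁ f (x, η x) - gG₂ f (x, η x) + gG₂ f (x, -h))) volume 0 L₁ := by
    apply Continuous.intervalIntegrable
    exact continuous_const.mul (((hηc'.mul (hG₁1.continuous.comp hsurf)).sub
      (hG₂1.continuous.comp hsurf)).add (hG₂1.continuous.comp hbotc))
  -- pointwise identity on [0, L₁]
  have hsplit : (∫ x in (0:ℝ)..L₁, (Qd f (x, η x) - deriv η x * Pd f (x, η x))
      * (x * (Pd f (x, η x) + deriv η x * Qd f (x, η x))))
      = ∫ x in (0:ℝ)..L₁,
          ((h / 2 * Pd f (x, -h) ^ 2 + 1 / 2 * ((η x - x * deriv η x)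
            * (Pd f (x, η x) ^ 2 + Qd f (x, η x) ^ 2
                - 2 * Qd f (x, η x) * (Qd f (x, η x) - deriv η x * Pd f (x, η x))))
          - (deriv η x * fF₁ f h (x, η x) - fF₂ f h (x, η x) + fF₂ f h (x, -h)))
          - h * (deriv η x * gG₁ f (x, η x) - gG₂ f (x, η x) + gG₂ f (x, -h))) := by
    apply intervalIntegral.integral_congr
    intro x hx
    rw [Set.uIcc_of_le hL.le] at hx
    have hq0 := hbot x hx
    simp only [fF₁, fF₂, gG₁, gG₂]
    linear_combination (x * Pd f (x, -h) - h / 2 * Qd f (x, -h)) * hq0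
  rw [hsplit, intervalIntegral.integral_sub ((hiA.add hiB).sub hiC) hiD,
    intervalIntegral.integral_sub (hiA.add hiB) hiC,
    intervalIntegral.integral_add hiA hiB,
    intervalIntegral.integral_const_mul (h / 2),
    intervalIntegral.integral_const_mul (1 / 2),
    intervalIntegral.integral_const_mul h,
    ← hfluxF, ← hfluxG]
  ring

end PohozaevAux

open PohozaevAux

/-- Pohozaev identity for the Dirichlet-to-Neumann operator,
two-dimensional (one-dimensional surface) static case.  Here
`ψ(x) = ϕ(x,η(x))`, `G(η)ψ(x) = ∂_yϕ(x,η(x)) - ∂ₓη(x)·∂ₓϕ(x,η(x))`,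
`B(x) = ∂_yϕ(x,η(x))` and `V(x) = ∂ₓϕ(x,η(x))`. -/
theorem pohozaev_2d
    (L₁ h : ℝ) (hL : 0 < L₁) (hh : 0 < h)
    (η : ℝ → ℝ) (ϕ : ℝ → ℝ → ℝ)
    (hη : ContDiff ℝ 2 η)
    (hϕ : ContDiff ℝ 2 (fun p : ℝ × ℝ => ϕ p.1 p.2))
    (hηb : ∀ x ∈ Icc (0:ℝ) L₁, -h / 2 ≤ η x)
    (hη0 : deriv η 0 = 0) (hηL : deriv η L₁ = 0)
    (hlap : ∀ x ∈ Icc (0:ℝ) L₁, ∀ y ∈ Icc (-h) (η x),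
      deriv (fun x' => phX ϕ x' y) x + deriv (fun y' => phY ϕ x y') y = 0)
    (hbc0 : ∀ y ∈ Icc (-h) (η 0), phX ϕ 0 y = 0)
    (hbcL : ∀ y ∈ Icc (-h) (η L₁), phX ϕ L₁ y = 0)
    (hbot : ∀ x ∈ Icc (0:ℝ) L₁, phY ϕ x (-h) = 0) :
    (∫ x in (0:ℝ)..L₁,
        (phY ϕ x (η x) - deriv η x * phX ϕ x (η x))
          * (x * deriv (fun x' => ϕ x' (η x')) x))
      = L₁ / 2 * (∫ y in (-h)..(η L₁), (phY ϕ L₁ y) ^ 2)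
        + h / 2 * (∫ x in (0:ℝ)..L₁, (phX ϕ x (-h)) ^ 2)
        + 1 / 2 * ∫ x in (0:ℝ)..L₁,
            (η x - x * deriv η x)
              * ((phX ϕ x (η x)) ^ 2 + (phY ϕ x (η x)) ^ 2
                  - 2 * phY ϕ x (η x)
                      * (phY ϕ x (η x) - deriv η x * phX ϕ x (η x))) := by
  have hfd : Differentiable ℝ (fun p : ℝ × ℝ => ϕ p.1 p.2) := hϕ.differentiable two_ne_zero
  have hηd : Differentiable ℝ η := (hη.of_le one_le_two).differentiable one_ne_zero
  -- representation of the partial derivatives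
  have hpx : ∀ x y : ℝ, phX ϕ x y = Pd (fun p : ℝ × ℝ => ϕ p.1 p.2) (x, y) := by
    intro x y
    have h3 : HasDerivAt (fun x' => ϕ x' y)
        (Pd (fun p : ℝ × ℝ => ϕ p.1 p.2) (x, y)) x :=
      hasDerivAt_curry_fst (hfd (x, y))
    exact h3.deriv.symm ▸ rfl
  have hpy : ∀ x y : ℝ, phY ϕ x y = Qd (fun p : ℝ × ℝ => ϕ p.1 p.2) (x, y) := by
    intro x y
    have h3 : HasDerivAt (fun y' => ϕ x y')
        (Qd (fun p : ℝ × ℝ => ϕ p.1 p.2) (x, y)) y :=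
      hasDerivAt_curry_snd (hfd (x, y))
    exact h3.deriv.symm ▸ rfl
  -- derivative of x ↦ ϕ(x, η x)
  have hψ : ∀ x : ℝ, deriv (fun x' => ϕ x' (η x')) x
      = Pd (fun p : ℝ × ℝ => ϕ p.1 p.2) (x, η x)
        + deriv η x * Qd (fun p : ℝ × ℝ => ϕ p.1 p.2) (x, η x) := by
    intro x
    have h2 : HasDerivAt (fun x' => ((x' : ℝ), η x')) ((1:ℝ), deriv η x) x :=
      (hasDerivAt_id x).prodMk (hηd x).hasDerivAt
    have h3 : HasDerivAt (fun x' => ϕ x' (η x'))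
        (fderiv ℝ (fun p : ℝ × ℝ => ϕ p.1 p.2) (x, η x) (1, deriv η x)) x :=
      by have := (hfd (x, η x)).hasFDerivAt.comp_hasDerivAt x h2; exact this
    rw [h3.deriv, clm_split]
    rfl
  have hηb' : ∀ x ∈ Icc (0:ℝ) L₁, -h ≤ η x := by
    intro x hx
    have := hηb x hx
    linarith
  simp only [hpx, hpy, hψ] at hlap hbc0 hbcL hbot ⊢
  exact main_aux L₁ h hL hh η (fun p : ℝ × ℝ => ϕ p.1 p.2) hη hϕ hηb' hlap hbc0 hbcL hbot
end
end

section
/- (Pohozaev identity, three-dimensional case.) In the static two-dimensional-surface setting (Q = [0,L₁] × [0,L₂]), one has ∬_Q (G(η)ψ)(x)·(x·∇ψ(x)) dx = (1/2)·[ L₁∫₀^{L₂}∫₋ₕ^{η(L₁,x₂)} |∇_{x,y}ϕ(L₁,x₂,y)|² dy dx₂ + L₂∫₀^{L₁}∫₋ₕ^{η(x₁,L₂)} |∇_{x,y}ϕ(x₁,L₂,y)|² dy dx₁ + h∬_Q |∇_{x,y}ϕ(x,−h)|² dx ] − (1/2)∬_Ω |∇_{x,y}ϕ|² dx dy + (1/2)∬_Q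 (η(x) − x·∇η(x))·(|V(x)|² + B(x)² − 2B(x)·G(η)ψ(x)) dx. (The bracketed quantity is (1/2)∫_R |∇_{x,y}ϕ|²·((x,y)·n) dS over the solid part R of ∂Ω, the faces {x₁ = 0} and {x₂ = 0} contributing zero.) -/
open Real Set MeasureTheory

set_option linter.unusedSectionVars false
set_option linter.unusedVariables false

noncomputable section

/-- `∂_{x₁}ϕ` -/
def pX1 (ϕ : ℝ → ℝ → ℝ → ℝ) (x₁ x₂ y : ℝ) : ℝ := deriv (fun s => ϕ s x₂ y) x₁

/-- `∂_{x₂}ϕ` -/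
def pX2 (ϕ : ℝ → ℝ → ℝ → ℝ) (x₁ x₂ y : ℝ) : ℝ := deriv (fun s => ϕ x₁ s y) x₂

/-- `∂_yϕ` -/
def pY (ϕ : ℝ → ℝ → ℝ → ℝ) (x₁ x₂ y : ℝ) : ℝ := deriv (fun s => ϕ x₁ x₂ s) y

/-- `|∇_{x,y}ϕ|²` -/
def gradSq (ϕ : ℝ → ℝ → ℝ → ℝ) (x₁ x₂ y : ℝ) : ℝ :=
  (pX1 ϕ x₁ x₂ y) ^ 2 + (pX2 ϕ x₁ x₂ y) ^ 2 + (pY ϕ x₁ x₂ y) ^ 2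

/-- `∂_{x₁}η` -/
def eX1 (η : ℝ → ℝ → ℝ) (x₁ x₂ : ℝ) : ℝ := deriv (fun s => η s x₂) x₁

/-- `∂_{x₂}η` -/
def eX2 (η : ℝ → ℝ → ℝ) (x₁ x₂ : ℝ) : ℝ := deriv (fun s => η x₁ s) x₂

-- slices (from e.lean, assume OK)
lemma hasDerivAt_slice1 {f : ℝ × ℝ × ℝ → ℝ} (hf : Differentiable ℝ f) (x₁ x₂ y : ℝ) :
    HasDerivAt (fun s => f (s, x₂, y)) (fderiv ℝ f (x₁, x₂, y) (1, 0, 0)) x₁ :=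
  (hf (x₁, x₂, y)).hasFDerivAt.comp_hasDerivAt x₁
    ((hasDerivAt_id _).prodMk ((hasDerivAt_const _ _).prodMk (hasDerivAt_const _ _)))
lemma hasDerivAt_slice2 {f : ℝ × ℝ × ℝ → ℝ} (hf : Differentiable ℝ f) (x₁ x₂ y : ℝ) :
    HasDerivAt (fun s => f (x₁, s, y)) (fderiv ℝ f (x₁, x₂, y) (0, 1, 0)) x₂ :=
  (hf (x₁, x₂, y)).hasFDerivAt.comp_hasDerivAt x₂
    ((hasDerivAt_const _ _).prodMk ((hasDerivAt_id _).prodMk (hasDerivAt_const _ _)))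
lemma hasDerivAt_slice3 {f : ℝ × ℝ × ℝ → ℝ} (hf : Differentiable ℝ f) (x₁ x₂ y : ℝ) :
    HasDerivAt (fun s => f (x₁, x₂, s)) (fderiv ℝ f (x₁, x₂, y) (0, 0, 1)) y :=
  (hf (x₁, x₂, y)).hasFDerivAt.comp_hasDerivAt y
    ((hasDerivAt_const _ _).prodMk ((hasDerivAt_const _ _).prodMk (hasDerivAt_id _)))
lemma hasDerivAt_slice1' {f : ℝ × ℝ → ℝ} (hf : Differentiable ℝ f) (x₁ x₂ : ℝ) :
    HasDerivAt (fun s => f (s, x₂)) (fderiv ℝ f (x₁, x₂) (1, 0)) x₁ :=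
  (hf (x₁, x₂)).hasFDerivAt.comp_hasDerivAt x₁
    ((hasDerivAt_id _).prodMk (hasDerivAt_const _ _))
lemma hasDerivAt_slice2' {f : ℝ × ℝ → ℝ} (hf : Differentiable ℝ f) (x₁ x₂ : ℝ) :
    HasDerivAt (fun s => f (x₁, s)) (fderiv ℝ f (x₁, x₂) (0, 1)) x₂ :=
  (hf (x₁, x₂)).hasFDerivAt.comp_hasDerivAt x₂
    ((hasDerivAt_const _ _).prodMk (hasDerivAt_id _))

def Phi3 (ϕ : ℝ → ℝ → ℝ → ℝ) : ℝ × ℝ × ℝ → ℝ := fun p => ϕ p.1 p.2.1 p.2.2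
def DD (ϕ : ℝ → ℝ → ℝ → ℝ) (v : ℝ × ℝ × ℝ) (p : ℝ × ℝ × ℝ) : ℝ := fderiv ℝ (Phi3 ϕ) p v
def SS (ϕ : ℝ → ℝ → ℝ → ℝ) (v w : ℝ × ℝ × ℝ) (p : ℝ × ℝ × ℝ) : ℝ := fderiv ℝ (DD ϕ v) p w
def D1 (ϕ : ℝ → ℝ → ℝ → ℝ) : ℝ × ℝ × ℝ → ℝ := DD ϕ (1,0,0)
def D2 (ϕ : ℝ → ℝ → ℝ → ℝ) : ℝ × ℝ × ℝ → ℝ := DD ϕ (0,1,0)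
def D3 (ϕ : ℝ → ℝ → ℝ → ℝ) : ℝ × ℝ × ℝ → ℝ := DD ϕ (0,0,1)
def FF3 (ϕ : ℝ → ℝ → ℝ → ℝ) (p : ℝ × ℝ × ℝ) : ℝ := D1 ϕ p ^ 2 + D2 ϕ p ^ 2 + D3 ϕ p ^ 2
def mM3 (ϕ : ℝ → ℝ → ℝ → ℝ) (p : ℝ × ℝ × ℝ) : ℝ :=
  p.1 * D1 ϕ p + p.2.1 * D2 ϕ p + p.2.2 * D3 ϕ p
def W1f (ϕ : ℝ → ℝ → ℝ → ℝ) (p : ℝ × ℝ × ℝ) : ℝ := mM3 ϕ p * D1 ϕ p - p.1 * FF3 ϕ p / 2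
def W2f (ϕ : ℝ → ℝ → ℝ → ℝ) (p : ℝ × ℝ × ℝ) : ℝ := mM3 ϕ p * D2 ϕ p - p.2.1 * FF3 ϕ p / 2
def W3f (ϕ : ℝ → ℝ → ℝ → ℝ) (p : ℝ × ℝ × ℝ) : ℝ := mM3 ϕ p * D3 ϕ p - p.2.2 * FF3 ϕ p / 2
def P1f (ϕ : ℝ → ℝ → ℝ → ℝ) (p : ℝ × ℝ × ℝ) : ℝ :=
  (D1 ϕ p + p.1 * SS ϕ (1,0,0) (1,0,0) p + p.2.1 * SS ϕ (0,1,0) (1,0,0) p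
      + p.2.2 * SS ϕ (0,0,1) (1,0,0) p) * D1 ϕ p + mM3 ϕ p * SS ϕ (1,0,0) (1,0,0) p
    - (FF3 ϕ p / 2 + p.1 * (D1 ϕ p * SS ϕ (1,0,0) (1,0,0) p
      + D2 ϕ p * SS ϕ (0,1,0) (1,0,0) p + D3 ϕ p * SS ϕ (0,0,1) (1,0,0) p))
def P2f (ϕ : ℝ → ℝ → ℝ → ℝ) (p : ℝ × ℝ × ℝ) : ℝ :=
  (p.1 * SS ϕ (1,0,0) (0,1,0) p + D2 ϕ p + p.2.1 * SS ϕ (0,1,0) (0,1,0) p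
      + p.2.2 * SS ϕ (0,0,1) (0,1,0) p) * D2 ϕ p + mM3 ϕ p * SS ϕ (0,1,0) (0,1,0) p
    - (FF3 ϕ p / 2 + p.2.1 * (D1 ϕ p * SS ϕ (1,0,0) (0,1,0) p
      + D2 ϕ p * SS ϕ (0,1,0) (0,1,0) p + D3 ϕ p * SS ϕ (0,0,1) (0,1,0) p))
def P3f (ϕ : ℝ → ℝ → ℝ → ℝ) (p : ℝ × ℝ × ℝ) : ℝ :=
  (p.1 * SS ϕ (1,0,0) (0,0,1) p + p.2.1 * SS ϕ (0,1,0) (0,0,1) p + D3 ϕ p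
      + p.2.2 * SS ϕ (0,0,1) (0,0,1) p) * D3 ϕ p + mM3 ϕ p * SS ϕ (0,0,1) (0,0,1) p
    - (FF3 ϕ p / 2 + p.2.2 * (D1 ϕ p * SS ϕ (1,0,0) (0,0,1) p
      + D2 ϕ p * SS ϕ (0,1,0) (0,0,1) p + D3 ϕ p * SS ϕ (0,0,1) (0,0,1) p))
def Eta2 (η : ℝ → ℝ → ℝ) : ℝ × ℝ → ℝ := fun x => η x.1 x.2
def E1 (η : ℝ → ℝ → ℝ) (x : ℝ × ℝ) : ℝ := fderiv ℝ (Eta2 η) x (1, 0)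
def E2 (η : ℝ → ℝ → ℝ) (x : ℝ × ℝ) : ℝ := fderiv ℝ (Eta2 η) x (0, 1)

section Facts
variable {ϕ : ℝ → ℝ → ℝ → ℝ} (hϕ : ContDiff ℝ 2 (Phi3 ϕ))
include hϕ

lemma Phi3_diff : Differentiable ℝ (Phi3 ϕ) := hϕ.differentiable (by norm_num)

lemma DD_contDiff (v : ℝ × ℝ × ℝ) : ContDiff ℝ 1 (DD ϕ v) :=
  (ContinuousLinearMap.apply ℝ ℝ v).contDiff.comp (hϕ.fderiv_right (by norm_num))

lemma DD_diff (v : ℝ × ℝ × ℝ) : Differentiable ℝ (DD ϕ v) :=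
  (DD_contDiff hϕ v).differentiable one_ne_zero

lemma DD_cont (v : ℝ × ℝ × ℝ) : Continuous (DD ϕ v) := (DD_diff hϕ v).continuous

lemma SS_cont (v w : ℝ × ℝ × ℝ) : Continuous (SS ϕ v w) := by
  have h := (contDiff_one_iff_fderiv.mp (DD_contDiff hϕ v)).2
  exact (ContinuousLinearMap.apply ℝ ℝ w).continuous.comp h

lemma SS_symm (v w : ℝ × ℝ × ℝ) (p : ℝ × ℝ × ℝ) : SS ϕ v w p = SS ϕ w v p := by
  have hfd : ContDiff ℝ 1 (fderiv ℝ (Phi3 ϕ)) := hϕ.fderiv_right (by norm_num)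
  have hdf : DifferentiableAt ℝ (fderiv ℝ (Phi3 ϕ)) p := (hfd.differentiable one_ne_zero) p
  have key : ∀ u : ℝ × ℝ × ℝ, fderiv ℝ (DD ϕ u) p
      = (ContinuousLinearMap.apply ℝ ℝ u).comp (fderiv ℝ (fderiv ℝ (Phi3 ϕ)) p) := fun u =>
    ((ContinuousLinearMap.apply ℝ ℝ u).hasFDerivAt.comp p hdf.hasFDerivAt).fderiv
  show fderiv ℝ (DD ϕ v) p w = fderiv ℝ (DD ϕ w) p v
  rw [key v, key w]
  simp only [ContinuousLinearMap.coe_comp', Function.comp_apply,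
    ContinuousLinearMap.apply_apply]
  exact second_derivative_symmetric (fun y => ((Phi3_diff hϕ) y).hasFDerivAt)
    hdf.hasFDerivAt w v

lemma pX1_eq (x₁ x₂ y : ℝ) : pX1 ϕ x₁ x₂ y = D1 ϕ (x₁, x₂, y) :=
  (hasDerivAt_slice1 (Phi3_diff hϕ) x₁ x₂ y).deriv
lemma pX2_eq (x₁ x₂ y : ℝ) : pX2 ϕ x₁ x₂ y = D2 ϕ (x₁, x₂, y) :=
  (hasDerivAt_slice2 (Phi3_diff hϕ) x₁ x₂ y).deriv
lemma pY_eq (x₁ x₂ y : ℝ) : pY ϕ x₁ x₂ y = D3 ϕ (x₁, x₂, y) :=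
  (hasDerivAt_slice3 (Phi3_diff hϕ) x₁ x₂ y).deriv
lemma gradSq_eq (x₁ x₂ y : ℝ) : gradSq ϕ x₁ x₂ y = FF3 ϕ (x₁, x₂, y) := by
  unfold gradSq FF3
  rw [pX1_eq hϕ, pX2_eq hϕ, pY_eq hϕ]

end Facts

section Facts2
variable {ϕ : ℝ → ℝ → ℝ → ℝ} (hϕ : ContDiff ℝ 2 (Phi3 ϕ))
include hϕ

lemma mM3_cont : Continuous (mM3 ϕ) :=
  ((continuous_fst.mul (DD_cont hϕ _)).add
    ((continuous_snd.fst.mul (DD_cont hϕ _)))).add (continuous_snd.snd.mul (DD_cont hϕ _))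

lemma FF3_cont : Continuous (FF3 ϕ) :=
  (((DD_cont hϕ _).pow 2).add ((DD_cont hϕ _).pow 2)).add ((DD_cont hϕ _).pow 2)

lemma W1f_cont : Continuous (W1f ϕ) :=
  ((mM3_cont hϕ).mul (DD_cont hϕ _)).sub ((continuous_fst.mul (FF3_cont hϕ)).div_const 2)
lemma W2f_cont : Continuous (W2f ϕ) :=
  ((mM3_cont hϕ).mul (DD_cont hϕ _)).sub ((continuous_snd.fst.mul (FF3_cont hϕ)).div_const 2)
lemma W3f_cont : Continuous (W3f ϕ) :=
  ((mM3_cont hϕ).mul (DD_cont hϕ _)).sub ((continuous_snd.snd.mul (FF3_cont hϕ)).div_const 2)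

lemma P1f_cont : Continuous (P1f ϕ) := by
  have c1 : Continuous (D1 ϕ) := DD_cont hϕ _
  have c2 : Continuous (D2 ϕ) := DD_cont hϕ _
  have c3 : Continuous (D3 ϕ) := DD_cont hϕ _
  have cm : Continuous (mM3 ϕ) := mM3_cont hϕ
  have cF : Continuous (FF3 ϕ) := FF3_cont hϕ
  have s1 : Continuous (SS ϕ (1,0,0) (1,0,0)) := SS_cont hϕ _ _
  have s2 : Continuous (SS ϕ (0,1,0) (1,0,0)) := SS_cont hϕ _ _
  have s3 : Continuous (SS ϕ (0,0,1) (1,0,0)) := SS_cont hϕ _ _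
  unfold P1f
  fun_prop

lemma P2f_cont : Continuous (P2f ϕ) := by
  have c1 : Continuous (D1 ϕ) := DD_cont hϕ _
  have c2 : Continuous (D2 ϕ) := DD_cont hϕ _
  have c3 : Continuous (D3 ϕ) := DD_cont hϕ _
  have cm : Continuous (mM3 ϕ) := mM3_cont hϕ
  have cF : Continuous (FF3 ϕ) := FF3_cont hϕ
  have s1 : Continuous (SS ϕ (1,0,0) (0,1,0)) := SS_cont hϕ _ _
  have s2 : Continuous (SS ϕ (0,1,0) (0,1,0)) := SS_cont hϕ _ _
  have s3 : Continuous (SS ϕ (0,0,1) (0,1,0)) := SS_cont hϕ _ _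
  unfold P2f
  fun_prop

lemma P3f_cont : Continuous (P3f ϕ) := by
  have c1 : Continuous (D1 ϕ) := DD_cont hϕ _
  have c2 : Continuous (D2 ϕ) := DD_cont hϕ _
  have c3 : Continuous (D3 ϕ) := DD_cont hϕ _
  have cm : Continuous (mM3 ϕ) := mM3_cont hϕ
  have cF : Continuous (FF3 ϕ) := FF3_cont hϕ
  have s1 : Continuous (SS ϕ (1,0,0) (0,0,1)) := SS_cont hϕ _ _
  have s2 : Continuous (SS ϕ (0,1,0) (0,0,1)) := SS_cont hϕ _ _
  have s3 : Continuous (SS ϕ (0,0,1) (0,0,1)) := SS_cont hϕ _ _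
  unfold P3f
  fun_prop

lemma W1_slice1 (x₁ x₂ y : ℝ) :
    HasDerivAt (fun s => W1f ϕ (s, x₂, y)) (P1f ϕ (x₁, x₂, y)) x₁ := by
  have hd1 := hasDerivAt_slice1 (DD_diff hϕ (1,0,0)) x₁ x₂ y
  have hd2 := hasDerivAt_slice1 (DD_diff hϕ (0,1,0)) x₁ x₂ y
  have hd3 := hasDerivAt_slice1 (DD_diff hϕ (0,0,1)) x₁ x₂ y
  have hm := (((hasDerivAt_id' (x := x₁)).mul hd1).add
      ((hasDerivAt_const x₁ x₂).mul hd2)).add ((hasDerivAt_const x₁ y).mul hd3)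
  have hF := ((hd1.pow 2).add (hd2.pow 2)).add (hd3.pow 2)
  have hW := (hm.mul hd1).sub (((hasDerivAt_id' (x := x₁)).mul hF).div_const 2)
  have hW' : HasDerivAt (fun s => W1f ϕ (s, x₂, y)) _ x₁ := hW
  convert hW' using 1
  unfold P1f mM3 FF3 D1 D2 D3 SS
  simp only [Pi.add_apply, Pi.mul_apply, Pi.pow_apply]
  ring

lemma W2_slice2 (x₁ x₂ y : ℝ) :
    HasDerivAt (fun s => W2f ϕ (x₁, s, y)) (P2f ϕ (x₁, x₂, y)) x₂ := by
  have hd1 := hasDerivAt_slice2 (DD_diff hϕ (1,0,0)) x₁ x₂ y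
  have hd2 := hasDerivAt_slice2 (DD_diff hϕ (0,1,0)) x₁ x₂ y
  have hd3 := hasDerivAt_slice2 (DD_diff hϕ (0,0,1)) x₁ x₂ y
  have hm := (((hasDerivAt_const x₂ x₁).mul hd1).add
      ((hasDerivAt_id' (x := x₂)).mul hd2)).add ((hasDerivAt_const x₂ y).mul hd3)
  have hF := ((hd1.pow 2).add (hd2.pow 2)).add (hd3.pow 2)
  have hW := (hm.mul hd2).sub (((hasDerivAt_id' (x := x₂)).mul hF).div_const 2)
  have hW' : HasDerivAt (fun s => W2f ϕ (x₁, s, y)) _ x₂ := hW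
  convert hW' using 1
  unfold P2f mM3 FF3 D1 D2 D3 SS
  simp only [Pi.add_apply, Pi.mul_apply, Pi.pow_apply]
  ring

lemma W3_slice3 (x₁ x₂ y : ℝ) :
    HasDerivAt (fun s => W3f ϕ (x₁, x₂, s)) (P3f ϕ (x₁, x₂, y)) y := by
  have hd1 := hasDerivAt_slice3 (DD_diff hϕ (1,0,0)) x₁ x₂ y
  have hd2 := hasDerivAt_slice3 (DD_diff hϕ (0,1,0)) x₁ x₂ y
  have hd3 := hasDerivAt_slice3 (DD_diff hϕ (0,0,1)) x₁ x₂ y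
  have hm := (((hasDerivAt_const y x₁).mul hd1).add
      ((hasDerivAt_const y x₂).mul hd2)).add ((hasDerivAt_id' (x := y)).mul hd3)
  have hF := ((hd1.pow 2).add (hd2.pow 2)).add (hd3.pow 2)
  have hW := (hm.mul hd3).sub (((hasDerivAt_id' (x := y)).mul hF).div_const 2)
  have hW' : HasDerivAt (fun s => W3f ϕ (x₁, x₂, s)) _ y := hW
  convert hW' using 1
  unfold P3f mM3 FF3 D1 D2 D3 SS
  simp only [Pi.add_apply, Pi.mul_apply, Pi.pow_apply]
  ring

/-- The pointwise divergence identity. -/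
lemma div_identity (p : ℝ × ℝ × ℝ)
    (hlapp : SS ϕ (1,0,0) (1,0,0) p + SS ϕ (0,1,0) (0,1,0) p + SS ϕ (0,0,1) (0,0,1) p = 0) :
    P1f ϕ p + P2f ϕ p + P3f ϕ p = -(FF3 ϕ p) / 2 := by
  have h12 := SS_symm hϕ (0,1,0) (1,0,0) p
  have h13 := SS_symm hϕ (0,0,1) (1,0,0) p
  have h23 := SS_symm hϕ (0,0,1) (0,1,0) p
  unfold P1f P2f P3f mM3 FF3
  rw [h12, h13, h23]
  linear_combination (p.1 * D1 ϕ p + p.2.1 * D2 ϕ p + p.2.2 * D3 ϕ p) * hlapp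

end Facts2

section Chain
variable {ϕ : ℝ → ℝ → ℝ → ℝ} {η : ℝ → ℝ → ℝ}
  (hϕ : ContDiff ℝ 2 (Phi3 ϕ)) (hη : ContDiff ℝ 2 (Eta2 η))
include hϕ hη

lemma eX1_eq (x₁ x₂ : ℝ) : eX1 η x₁ x₂ = E1 η (x₁, x₂) :=
  (hasDerivAt_slice1' (hη.differentiable (by norm_num)) x₁ x₂).deriv

lemma eX2_eq (x₁ x₂ : ℝ) : eX2 η x₁ x₂ = E2 η (x₁, x₂) :=
  (hasDerivAt_slice2' (hη.differentiable (by norm_num)) x₁ x₂).deriv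

lemma chain1 (x₁ x₂ : ℝ) :
    deriv (fun s => ϕ s x₂ (η s x₂)) x₁
      = D1 ϕ (x₁, x₂, η x₁ x₂) + E1 η (x₁, x₂) * D3 ϕ (x₁, x₂, η x₁ x₂) := by
  have hηd : HasDerivAt (fun s => η s x₂) (E1 η (x₁, x₂)) x₁ :=
    hasDerivAt_slice1' (hη.differentiable (by norm_num)) x₁ x₂
  have hc : HasDerivAt (fun s => ((s, x₂, η s x₂) : ℝ × ℝ × ℝ)) (1, 0, E1 η (x₁, x₂)) x₁ :=
    (hasDerivAt_id _).prodMk ((hasDerivAt_const _ _).prodMk hηd)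
  have h := ((Phi3_diff hϕ) (x₁, x₂, η x₁ x₂)).hasFDerivAt.comp_hasDerivAt x₁ hc
  have hv : ((1 : ℝ), (0 : ℝ), E1 η (x₁, x₂))
      = ((1,0,0) : ℝ × ℝ × ℝ) + E1 η (x₁, x₂) • ((0,0,1) : ℝ × ℝ × ℝ) := by
    simp [Prod.ext_iff]
  have h2 : deriv (fun s => ϕ s x₂ (η s x₂)) x₁
      = fderiv ℝ (Phi3 ϕ) (x₁, x₂, η x₁ x₂) (1, 0, E1 η (x₁, x₂)) := h.deriv
  rw [h2, hv, map_add, _root_.map_smul]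
  show D1 ϕ _ + E1 η (x₁, x₂) • D3 ϕ _ = _
  rw [smul_eq_mul]

lemma chain2 (x₁ x₂ : ℝ) :
    deriv (fun s => ϕ x₁ s (η x₁ s)) x₂
      = D2 ϕ (x₁, x₂, η x₁ x₂) + E2 η (x₁, x₂) * D3 ϕ (x₁, x₂, η x₁ x₂) := by
  have hηd : HasDerivAt (fun s => η x₁ s) (E2 η (x₁, x₂)) x₂ :=
    hasDerivAt_slice2' (hη.differentiable (by norm_num)) x₁ x₂
  have hc : HasDerivAt (fun s => ((x₁, s, η x₁ s) : ℝ × ℝ × ℝ)) (0, 1, E2 η (x₁, x₂)) x₂ :=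
    (hasDerivAt_const _ _).prodMk ((hasDerivAt_id _).prodMk hηd)
  have h := ((Phi3_diff hϕ) (x₁, x₂, η x₁ x₂)).hasFDerivAt.comp_hasDerivAt x₂ hc
  have hv : ((0 : ℝ), (1 : ℝ), E2 η (x₁, x₂))
      = ((0,1,0) : ℝ × ℝ × ℝ) + E2 η (x₁, x₂) • ((0,0,1) : ℝ × ℝ × ℝ) := by
    simp [Prod.ext_iff]
  have h2 : deriv (fun s => ϕ x₁ s (η x₁ s)) x₂
      = fderiv ℝ (Phi3 ϕ) (x₁, x₂, η x₁ x₂) (0, 1, E2 η (x₁, x₂)) := h.deriv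
  rw [h2, hv, map_add, _root_.map_smul]
  show D2 ϕ _ + E2 η (x₁, x₂) • D3 ϕ _ = _
  rw [smul_eq_mul]

/-- Translate the Laplace hypothesis. -/
lemma lap_translate (x₁ x₂ y : ℝ)
    (h : deriv (fun s => pX1 ϕ s x₂ y) x₁ + deriv (fun s => pX2 ϕ x₁ s y) x₂
        + deriv (fun s => pY ϕ x₁ x₂ s) y = 0) :
    SS ϕ (1,0,0) (1,0,0) (x₁,x₂,y) + SS ϕ (0,1,0) (0,1,0) (x₁,x₂,y)
      + SS ϕ (0,0,1) (0,0,1) (x₁,x₂,y) = 0 := by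
  have e1 : (fun s => pX1 ϕ s x₂ y) = fun s => D1 ϕ (s, x₂, y) :=
    funext fun s => pX1_eq hϕ s x₂ y
  have e2 : (fun s => pX2 ϕ x₁ s y) = fun s => D2 ϕ (x₁, s, y) :=
    funext fun s => pX2_eq hϕ x₁ s y
  have e3 : (fun s => pY ϕ x₁ x₂ s) = fun s => D3 ϕ (x₁, x₂, s) :=
    funext fun s => pY_eq hϕ x₁ x₂ s
  rw [e1, e2, e3] at h
  have hs1 : HasDerivAt (fun s => D1 ϕ (s, x₂, y)) (SS ϕ (1,0,0) (1,0,0) (x₁,x₂,y)) x₁ :=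
    hasDerivAt_slice1 (DD_diff hϕ (1,0,0)) x₁ x₂ y
  have hs2 : HasDerivAt (fun s => D2 ϕ (x₁, s, y)) (SS ϕ (0,1,0) (0,1,0) (x₁,x₂,y)) x₂ :=
    hasDerivAt_slice2 (DD_diff hϕ (0,1,0)) x₁ x₂ y
  have hs3 : HasDerivAt (fun s => D3 ϕ (x₁, x₂, s)) (SS ϕ (0,0,1) (0,0,1) (x₁,x₂,y)) y :=
    hasDerivAt_slice3 (DD_diff hϕ (0,0,1)) x₁ x₂ y
  rw [hs1.deriv, hs2.deriv, hs3.deriv] at h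
  exact h

lemma E1_cont : Continuous (E1 η) :=
  (ContinuousLinearMap.apply ℝ ℝ ((1:ℝ),(0:ℝ))).continuous.comp
    (contDiff_one_iff_fderiv.mp (hη.of_le (by norm_num))).2

lemma E2_cont : Continuous (E2 η) :=
  (ContinuousLinearMap.apply ℝ ℝ ((0:ℝ),(1:ℝ))).continuous.comp
    (contDiff_one_iff_fderiv.mp (hη.of_le (by norm_num))).2

end Chain

lemma swap_cont {f : ℝ → ℝ → ℝ} (hf : Continuous (Function.uncurry f))
    {a b c d : ℝ} (hab : a ≤ b) (hcd : c ≤ d) :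
    ∫ x in a..b, ∫ y in c..d, f x y = ∫ y in c..d, ∫ x in a..b, f x y := by
  simp only [intervalIntegral.integral_of_le hab, intervalIntegral.integral_of_le hcd]
  have hint : Integrable (Function.uncurry f)
      ((volume.restrict (Ioc a b)).prod (volume.restrict (Ioc c d))) := by
    rw [Measure.prod_restrict]
    exact (hf.continuousOn.integrableOn_compact (isCompact_Icc.prod isCompact_Icc)).mono_set
      (Set.prod_mono Ioc_subset_Icc_self Ioc_subset_Icc_self)
  exact MeasureTheory.integral_integral_swap hint

lemma hasDerivAt_param {g g' : ℝ → ℝ → ℝ} (hg : Continuous (Function.uncurry g))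
    (hg' : Continuous (Function.uncurry g'))
    (hd : ∀ t y, HasDerivAt (fun t => g t y) (g' t y) t)
    (a c t₀ : ℝ) :
    HasDerivAt (fun t => ∫ y in a..c, g t y) (∫ y in a..c, g' t₀ y) t₀ := by
  obtain ⟨C, hC⟩ : ∃ C, ∀ p ∈ Icc (t₀ - 1) (t₀ + 1) ×ˢ uIcc a c, ‖Function.uncurry g' p‖ ≤ C :=
    (isCompact_Icc.prod isCompact_uIcc).exists_bound_of_continuousOn hg'.continuousOn
  have hcont : ∀ t : ℝ, Continuous (g t) := fun t =>
    hg.comp (continuous_const.prodMk continuous_id)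
  have hcont' : ∀ t : ℝ, Continuous (g' t) := fun t =>
    hg'.comp (continuous_const.prodMk continuous_id)
  refine (intervalIntegral.hasDerivAt_integral_of_dominated_loc_of_deriv_le
      (F := g) (F' := g') (bound := fun _ => C) (Metric.ball_mem_nhds t₀ one_pos)
      (Filter.Eventually.of_forall fun t => (hcont t).aestronglyMeasurable)
      ((hcont t₀).intervalIntegrable _ _)
      (hcont' t₀).aestronglyMeasurable ?_ (intervalIntegrable_const) ?_).2
  · refine Filter.Eventually.of_forall fun y hy => fun x hx => ?_
    have hx' : x ∈ Icc (t₀ - 1) (t₀ + 1) := by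
      have := Metric.mem_ball.mp hx
      rw [Real.dist_eq] at this
      constructor <;> [linarith [abs_lt.mp this]; linarith [(abs_lt.mp this).2]]
    exact hC (x, y) ⟨hx', uIoc_subset_uIcc hy⟩
  · exact Filter.Eventually.of_forall fun y _ => fun x _ => hd x y

lemma hasFDerivAt_endpoint {g : ℝ → ℝ → ℝ} (hg : Continuous (Function.uncurry g))
    (t₀ s₀ : ℝ) :
    HasFDerivAt (fun p : ℝ × ℝ => ∫ y in s₀..p.2, g p.1 y)
      ((ContinuousLinearMap.snd ℝ ℝ ℝ).smulRight (g t₀ s₀)) (t₀, s₀) := by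
  have hcont : ∀ t : ℝ, Continuous (g t) := fun t =>
    hg.comp (continuous_const.prodMk continuous_id)
  rw [hasFDerivAt_iff_isLittleO_nhds_zero]
  rw [Asymptotics.isLittleO_iff]
  intro c hc
  obtain ⟨δ, hδ, hδ'⟩ := Metric.continuousAt_iff.mp hg.continuousAt (ε := c) hc
  have : ∀ᶠ p : ℝ × ℝ in nhds 0, ‖p‖ < δ := by
    have := Metric.ball_mem_nhds (0 : ℝ × ℝ) hδ
    filter_upwards [this] with p hp
    simpa [dist_eq_norm] using hp
  filter_upwards [this] with p hp
  obtain ⟨v, w⟩ := p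
  simp only [Prod.mk_add_mk, Prod.snd]
  have hv : |v| < δ := lt_of_le_of_lt (by simpa using (norm_fst_le (v, w))) hp
  have hw : |w| < δ := lt_of_le_of_lt (by simpa using (norm_snd_le (v, w))) hp
  have key : ∀ y ∈ Set.uIoc s₀ (s₀ + w), ‖g (t₀ + v) y - g t₀ s₀‖ ≤ c := by
    intro y hy
    have hy1 : s₀ - |w| ≤ y := by
      have h1 : s₀ - |w| ≤ min s₀ (s₀ + w) :=
        le_min (by linarith [abs_nonneg w]) (by linarith [neg_abs_le w])
      exact h1.trans hy.1.le
    have hy2 : y ≤ s₀ + |w| := by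
      have h2 : max s₀ (s₀ + w) ≤ s₀ + |w| :=
        max_le (by linarith [abs_nonneg w]) (by linarith [le_abs_self w])
      exact hy.2.trans h2
    have hdist : dist ((t₀ + v, y) : ℝ × ℝ) (t₀, s₀) < δ := by
      rw [Prod.dist_eq]
      refine max_lt ?_ ?_
      · simpa [Real.dist_eq] using hv
      · rw [Real.dist_eq]
        have : |y - s₀| ≤ |w| := abs_le.mpr ⟨by linarith, by linarith⟩
        exact lt_of_le_of_lt this hw
    exact le_of_lt (by simpa [Real.dist_eq] using hδ' hdist)
  have heq : (∫ y in s₀..(s₀ + w), g (t₀ + v) y) - w * g t₀ s₀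
      = ∫ y in s₀..(s₀ + w), (g (t₀ + v) y - g t₀ s₀) := by
    rw [intervalIntegral.integral_sub ((hcont _).intervalIntegrable _ _)
      (intervalIntegrable_const)]
    simp [mul_comm]
  calc ‖(∫ y in s₀..(s₀ + w), g (t₀ + v) y) - (∫ y in s₀..s₀, g t₀ y)
      - ((ContinuousLinearMap.snd ℝ ℝ ℝ).smulRight (g t₀ s₀)) (v, w)‖
      = ‖(∫ y in s₀..(s₀ + w), g (t₀ + v) y) - w * g t₀ s₀‖ := by
        simp [ContinuousLinearMap.smulRight_apply, smul_eq_mul, mul_comm]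
    _ = ‖∫ y in s₀..(s₀ + w), (g (t₀ + v) y - g t₀ s₀)‖ := by rw [heq]
    _ ≤ c * |s₀ + w - s₀| := intervalIntegral.norm_integral_le_of_norm_le_const key
    _ ≤ c * ‖(v, w)‖ := by
        simp only [add_sub_cancel_left]
        gcongr
        simpa using (norm_snd_le (v, w))

lemma leibniz {g g' : ℝ → ℝ → ℝ} (hg : Continuous (Function.uncurry g))
    (hg' : Continuous (Function.uncurry g'))
    (hd : ∀ t y, HasDerivAt (fun t => g t y) (g' t y) t)
    {b : ℝ → ℝ} {b' : ℝ} {t₀ : ℝ} (hb : HasDerivAt b b' t₀) (a : ℝ) :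
    HasDerivAt (fun t => ∫ y in a..b t, g t y)
      (b' * g t₀ (b t₀) + ∫ y in a..b t₀, g' t₀ y) t₀ := by
  have hcont : ∀ t : ℝ, Continuous (g t) := fun t =>
    hg.comp (continuous_const.prodMk continuous_id)
  have key : ∀ t, ∫ y in a..b t, g t y
      = (∫ y in a..b t₀, g t y) + ∫ y in (b t₀)..(b t), g t y := fun t =>
    (intervalIntegral.integral_add_adjacent_intervals ((hcont t).intervalIntegrable _ _)
      ((hcont t).intervalIntegrable _ _)).symm
  have h1 : HasDerivAt (fun t => ∫ y in a..b t₀, g t y) (∫ y in a..b t₀, g' t₀ y) t₀ :=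
    hasDerivAt_param hg hg' hd a (b t₀) t₀
  have hcurve : HasDerivAt (fun t => ((t, b t) : ℝ × ℝ)) (1, b') t₀ :=
    (hasDerivAt_id t₀).prodMk hb
  have h2 : HasDerivAt (fun t => ∫ y in (b t₀)..(b t), g t y) (b' * g t₀ (b t₀)) t₀ := by
    have := (hasFDerivAt_endpoint hg t₀ (b t₀)).comp_hasDerivAt t₀ hcurve
    simpa [ContinuousLinearMap.smulRight_apply, smul_eq_mul, mul_comm, Function.comp_def] using this
  have := h1.fun_add h2
  rw [show (fun t => ∫ y in a..b t, g t y)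
      = fun t => (∫ y in a..b t₀, g t y) + ∫ y in (b t₀)..(b t), g t y from funext key]
  exact this.congr_deriv (add_comm _ _)


/-- Pohozaev identity for the Dirichlet-to-Neumann operator,
three-dimensional (two-dimensional surface) static case, in the rectangle
`Q = [0,L₁] × [0,L₂]`.  Here `ψ(x) = ϕ(x,η(x))`,
`G(η)ψ = ∂_yϕ - ∇η·∇ₓϕ` at the surface, `B = ∂_yϕ|_{y=η}`, `V = ∇ₓϕ|_{y=η}`. -/
theorem pohozaev_3d
    (L₁ L₂ h : ℝ) (hL₁ : 0 < L₁) (hL₂ : 0 < L₂) (hh : 0 < h)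
    (η : ℝ → ℝ → ℝ) (ϕ : ℝ → ℝ → ℝ → ℝ)
    (hη : ContDiff ℝ 2 (fun p : ℝ × ℝ => η p.1 p.2))
    (hϕ : ContDiff ℝ 2 (fun p : ℝ × ℝ × ℝ => ϕ p.1 p.2.1 p.2.2))
    (hηb : ∀ x₁ ∈ Icc (0:ℝ) L₁, ∀ x₂ ∈ Icc (0:ℝ) L₂, -h / 2 ≤ η x₁ x₂)
    (hη1 : ∀ x₁ ∈ ({0, L₁} : Set ℝ), ∀ x₂ ∈ Icc (0:ℝ) L₂, eX1 η x₁ x₂ = 0)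
    (hη2 : ∀ x₂ ∈ ({0, L₂} : Set ℝ), ∀ x₁ ∈ Icc (0:ℝ) L₁, eX2 η x₁ x₂ = 0)
    (hlap : ∀ x₁ ∈ Icc (0:ℝ) L₁, ∀ x₂ ∈ Icc (0:ℝ) L₂, ∀ y ∈ Icc (-h) (η x₁ x₂),
      deriv (fun s => pX1 ϕ s x₂ y) x₁ + deriv (fun s => pX2 ϕ x₁ s y) x₂
        + deriv (fun s => pY ϕ x₁ x₂ s) y = 0)
    (hbc1 : ∀ x₁ ∈ ({0, L₁} : Set ℝ), ∀ x₂ ∈ Icc (0:ℝ) L₂, ∀ y ∈ Icc (-h) (η x₁ x₂),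
      pX1 ϕ x₁ x₂ y = 0)
    (hbc2 : ∀ x₂ ∈ ({0, L₂} : Set ℝ), ∀ x₁ ∈ Icc (0:ℝ) L₁, ∀ y ∈ Icc (-h) (η x₁ x₂),
      pX2 ϕ x₁ x₂ y = 0)
    (hbot : ∀ x₁ ∈ Icc (0:ℝ) L₁, ∀ x₂ ∈ Icc (0:ℝ) L₂, pY ϕ x₁ x₂ (-h) = 0) :
    (∫ x₁ in (0:ℝ)..L₁, ∫ x₂ in (0:ℝ)..L₂,
        (pY ϕ x₁ x₂ (η x₁ x₂)
            - (eX1 η x₁ x₂ * pX1 ϕ x₁ x₂ (η x₁ x₂)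
                + eX2 η x₁ x₂ * pX2 ϕ x₁ x₂ (η x₁ x₂)))
          * (x₁ * deriv (fun s => ϕ s x₂ (η s x₂)) x₁
              + x₂ * deriv (fun s => ϕ x₁ s (η x₁ s)) x₂))
      = 1 / 2 * (L₁ * (∫ x₂ in (0:ℝ)..L₂, ∫ y in (-h)..(η L₁ x₂), gradSq ϕ L₁ x₂ y)
            + L₂ * (∫ x₁ in (0:ℝ)..L₁, ∫ y in (-h)..(η x₁ L₂), gradSq ϕ x₁ L₂ y)
            + h * ∫ x₁ in (0:ℝ)..L₁, ∫ x₂ in (0:ℝ)..L₂, gradSq ϕ x₁ x₂ (-h))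
        - 1 / 2 * (∫ x₁ in (0:ℝ)..L₁, ∫ x₂ in (0:ℝ)..L₂, ∫ y in (-h)..(η x₁ x₂),
            gradSq ϕ x₁ x₂ y)
        + 1 / 2 * ∫ x₁ in (0:ℝ)..L₁, ∫ x₂ in (0:ℝ)..L₂,
            (η x₁ x₂ - (x₁ * eX1 η x₁ x₂ + x₂ * eX2 η x₁ x₂))
              * ((pX1 ϕ x₁ x₂ (η x₁ x₂)) ^ 2 + (pX2 ϕ x₁ x₂ (η x₁ x₂)) ^ 2
                  + (pY ϕ x₁ x₂ (η x₁ x₂)) ^ 2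
                  - 2 * pY ϕ x₁ x₂ (η x₁ x₂)
                      * (pY ϕ x₁ x₂ (η x₁ x₂)
                          - (eX1 η x₁ x₂ * pX1 ϕ x₁ x₂ (η x₁ x₂)
                              + eX2 η x₁ x₂ * pX2 ϕ x₁ x₂ (η x₁ x₂)))) := by
  have hΦ : ContDiff ℝ 2 (Phi3 ϕ) := hϕ
  have hE : ContDiff ℝ 2 (Eta2 η) := hη
  simp only [gradSq_eq hΦ, pX1_eq hΦ, pX2_eq hΦ, pY_eq hΦ, eX1_eq hΦ hE, eX2_eq hΦ hE,
    chain1 hΦ hE, chain2 hΦ hE]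
  set A₁ := ∫ x₂ in (0:ℝ)..L₂, ∫ y in (-h)..(η L₁ x₂), FF3 ϕ (L₁, x₂, y) with hA₁
  set A₂ := ∫ x₁ in (0:ℝ)..L₁, ∫ y in (-h)..(η x₁ L₂), FF3 ϕ (x₁, L₂, y) with hA₂
  set A₃ := ∫ x₁ in (0:ℝ)..L₁, ∫ x₂ in (0:ℝ)..L₂, FF3 ϕ (x₁, x₂, -h) with hA₃
  set T := ∫ x₁ in (0:ℝ)..L₁, ∫ x₂ in (0:ℝ)..L₂, ∫ y in (-h)..(η x₁ x₂),
      FF3 ϕ (x₁, x₂, y) with hT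
  set K := ∫ x₁ in (0:ℝ)..L₁, ∫ x₂ in (0:ℝ)..L₂,
      (η x₁ x₂ - (x₁ * E1 η (x₁, x₂) + x₂ * E2 η (x₁, x₂)))
        * ((D1 ϕ (x₁, x₂, η x₁ x₂)) ^ 2 + (D2 ϕ (x₁, x₂, η x₁ x₂)) ^ 2
            + (D3 ϕ (x₁, x₂, η x₁ x₂)) ^ 2
            - 2 * D3 ϕ (x₁, x₂, η x₁ x₂)
                * (D3 ϕ (x₁, x₂, η x₁ x₂)
                    - (E1 η (x₁, x₂) * D1 ϕ (x₁, x₂, η x₁ x₂)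
                        + E2 η (x₁, x₂) * D2 ϕ (x₁, x₂, η x₁ x₂)))) with hK
  set S := ∫ x₁ in (0:ℝ)..L₁, ∫ x₂ in (0:ℝ)..L₂,
      (E1 η (x₁, x₂) * W1f ϕ (x₁, x₂, η x₁ x₂) + E2 η (x₁, x₂) * W2f ϕ (x₁, x₂, η x₁ x₂)
        - W3f ϕ (x₁, x₂, η x₁ x₂)) with hS
  have hLHS : (∫ x₁ in (0:ℝ)..L₁, ∫ x₂ in (0:ℝ)..L₂,
      (D3 ϕ (x₁, x₂, η x₁ x₂)
          - (E1 η (x₁, x₂) * D1 ϕ (x₁, x₂, η x₁ x₂)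
              + E2 η (x₁, x₂) * D2 ϕ (x₁, x₂, η x₁ x₂)))
        * (x₁ * (D1 ϕ (x₁, x₂, η x₁ x₂) + E1 η (x₁, x₂) * D3 ϕ (x₁, x₂, η x₁ x₂))
            + x₂ * (D2 ϕ (x₁, x₂, η x₁ x₂) + E2 η (x₁, x₂) * D3 ϕ (x₁, x₂, η x₁ x₂))))
      = -S + K / 2 := by
    have cη : Continuous fun x : ℝ × ℝ => η x.1 x.2 := hE.continuous
    have cSurf : Continuous fun x : ℝ × ℝ => ((x.1, x.2, η x.1 x.2) : ℝ × ℝ × ℝ) :=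
      continuous_fst.prodMk (continuous_snd.prodMk cη)
    have cE1 : Continuous (E1 η) := E1_cont hΦ hE
    have cE2 : Continuous (E2 η) := E2_cont hΦ hE
    have cD1s : Continuous fun x : ℝ × ℝ => D1 ϕ (x.1, x.2, η x.1 x.2) :=
      (DD_cont hΦ _).comp cSurf
    have cD2s : Continuous fun x : ℝ × ℝ => D2 ϕ (x.1, x.2, η x.1 x.2) :=
      (DD_cont hΦ _).comp cSurf
    have cD3s : Continuous fun x : ℝ × ℝ => D3 ϕ (x.1, x.2, η x.1 x.2) :=
      (DD_cont hΦ _).comp cSurf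
    have cW1s : Continuous fun x : ℝ × ℝ => W1f ϕ (x.1, x.2, η x.1 x.2) :=
      (W1f_cont hΦ).comp cSurf
    have cW2s : Continuous fun x : ℝ × ℝ => W2f ϕ (x.1, x.2, η x.1 x.2) :=
      (W2f_cont hΦ).comp cSurf
    have cW3s : Continuous fun x : ℝ × ℝ => W3f ϕ (x.1, x.2, η x.1 x.2) :=
      (W3f_cont hΦ).comp cSurf
    have cs : Continuous (fun x : ℝ × ℝ => E1 η x * W1f ϕ (x.1, x.2, η x.1 x.2)
        + E2 η x * W2f ϕ (x.1, x.2, η x.1 x.2) - W3f ϕ (x.1, x.2, η x.1 x.2)) :=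
      ((cE1.mul cW1s).add (cE2.mul cW2s)).sub cW3s
    have ck : Continuous (fun x : ℝ × ℝ =>
        (η x.1 x.2 - (x.1 * E1 η x + x.2 * E2 η x))
          * ((D1 ϕ (x.1, x.2, η x.1 x.2)) ^ 2 + (D2 ϕ (x.1, x.2, η x.1 x.2)) ^ 2
              + (D3 ϕ (x.1, x.2, η x.1 x.2)) ^ 2
              - 2 * D3 ϕ (x.1, x.2, η x.1 x.2)
                  * (D3 ϕ (x.1, x.2, η x.1 x.2)
                      - (E1 η x * D1 ϕ (x.1, x.2, η x.1 x.2)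
                          + E2 η x * D2 ϕ (x.1, x.2, η x.1 x.2))))) := by fun_prop
    have hpt : ∀ x₁ x₂ : ℝ,
        (D3 ϕ (x₁, x₂, η x₁ x₂)
            - (E1 η (x₁, x₂) * D1 ϕ (x₁, x₂, η x₁ x₂)
                + E2 η (x₁, x₂) * D2 ϕ (x₁, x₂, η x₁ x₂)))
          * (x₁ * (D1 ϕ (x₁, x₂, η x₁ x₂) + E1 η (x₁, x₂) * D3 ϕ (x₁, x₂, η x₁ x₂))
              + x₂ * (D2 ϕ (x₁, x₂, η x₁ x₂) + E2 η (x₁, x₂) * D3 ϕ (x₁, x₂, η x₁ x₂)))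
        = -(E1 η (x₁, x₂) * W1f ϕ (x₁, x₂, η x₁ x₂)
              + E2 η (x₁, x₂) * W2f ϕ (x₁, x₂, η x₁ x₂) - W3f ϕ (x₁, x₂, η x₁ x₂))
          + ((η x₁ x₂ - (x₁ * E1 η (x₁, x₂) + x₂ * E2 η (x₁, x₂)))
              * ((D1 ϕ (x₁, x₂, η x₁ x₂)) ^ 2 + (D2 ϕ (x₁, x₂, η x₁ x₂)) ^ 2
                  + (D3 ϕ (x₁, x₂, η x₁ x₂)) ^ 2
                  - 2 * D3 ϕ (x₁, x₂, η x₁ x₂)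
                      * (D3 ϕ (x₁, x₂, η x₁ x₂)
                          - (E1 η (x₁, x₂) * D1 ϕ (x₁, x₂, η x₁ x₂)
                              + E2 η (x₁, x₂) * D2 ϕ (x₁, x₂, η x₁ x₂))))) / 2 := by
      intro x₁ x₂
      simp only [W1f, W2f, W3f, mM3, FF3]
      ring
    have inner : ∀ x₁ : ℝ, (∫ x₂ in (0:ℝ)..L₂,
        (D3 ϕ (x₁, x₂, η x₁ x₂)
            - (E1 η (x₁, x₂) * D1 ϕ (x₁, x₂, η x₁ x₂)
                + E2 η (x₁, x₂) * D2 ϕ (x₁, x₂, η x₁ x₂)))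
          * (x₁ * (D1 ϕ (x₁, x₂, η x₁ x₂) + E1 η (x₁, x₂) * D3 ϕ (x₁, x₂, η x₁ x₂))
              + x₂ * (D2 ϕ (x₁, x₂, η x₁ x₂) + E2 η (x₁, x₂) * D3 ϕ (x₁, x₂, η x₁ x₂))))
        = -(∫ x₂ in (0:ℝ)..L₂, (E1 η (x₁, x₂) * W1f ϕ (x₁, x₂, η x₁ x₂)
              + E2 η (x₁, x₂) * W2f ϕ (x₁, x₂, η x₁ x₂) - W3f ϕ (x₁, x₂, η x₁ x₂)))
          + (∫ x₂ in (0:ℝ)..L₂,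
              (η x₁ x₂ - (x₁ * E1 η (x₁, x₂) + x₂ * E2 η (x₁, x₂)))
                * ((D1 ϕ (x₁, x₂, η x₁ x₂)) ^ 2 + (D2 ϕ (x₁, x₂, η x₁ x₂)) ^ 2
                    + (D3 ϕ (x₁, x₂, η x₁ x₂)) ^ 2
                    - 2 * D3 ϕ (x₁, x₂, η x₁ x₂)
                        * (D3 ϕ (x₁, x₂, η x₁ x₂)
                            - (E1 η (x₁, x₂) * D1 ϕ (x₁, x₂, η x₁ x₂)
                                + E2 η (x₁, x₂) * D2 ϕ (x₁, x₂, η x₁ x₂))))) / 2 := by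
      intro x₁
      rw [intervalIntegral.integral_congr (g := fun x₂ =>
        -(E1 η (x₁, x₂) * W1f ϕ (x₁, x₂, η x₁ x₂)
              + E2 η (x₁, x₂) * W2f ϕ (x₁, x₂, η x₁ x₂) - W3f ϕ (x₁, x₂, η x₁ x₂))
          + ((η x₁ x₂ - (x₁ * E1 η (x₁, x₂) + x₂ * E2 η (x₁, x₂)))
              * ((D1 ϕ (x₁, x₂, η x₁ x₂)) ^ 2 + (D2 ϕ (x₁, x₂, η x₁ x₂)) ^ 2
                  + (D3 ϕ (x₁, x₂, η x₁ x₂)) ^ 2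
                  - 2 * D3 ϕ (x₁, x₂, η x₁ x₂)
                      * (D3 ϕ (x₁, x₂, η x₁ x₂)
                          - (E1 η (x₁, x₂) * D1 ϕ (x₁, x₂, η x₁ x₂)
                              + E2 η (x₁, x₂) * D2 ϕ (x₁, x₂, η x₁ x₂))))) / 2)
        (fun x₂ _ => hpt x₁ x₂)]
      have i1 : IntervalIntegrable (fun x₂ : ℝ =>
          -(E1 η (x₁, x₂) * W1f ϕ (x₁, x₂, η x₁ x₂)
              + E2 η (x₁, x₂) * W2f ϕ (x₁, x₂, η x₁ x₂) - W3f ϕ (x₁, x₂, η x₁ x₂)))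
          volume 0 L₂ :=
        ((cs.comp (continuous_const.prodMk continuous_id)).neg).intervalIntegrable _ _
      have i2 : IntervalIntegrable (fun x₂ : ℝ =>
          ((η x₁ x₂ - (x₁ * E1 η (x₁, x₂) + x₂ * E2 η (x₁, x₂)))
              * ((D1 ϕ (x₁, x₂, η x₁ x₂)) ^ 2 + (D2 ϕ (x₁, x₂, η x₁ x₂)) ^ 2
                  + (D3 ϕ (x₁, x₂, η x₁ x₂)) ^ 2
                  - 2 * D3 ϕ (x₁, x₂, η x₁ x₂)
                      * (D3 ϕ (x₁, x₂, η x₁ x₂)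
                          - (E1 η (x₁, x₂) * D1 ϕ (x₁, x₂, η x₁ x₂)
                              + E2 η (x₁, x₂) * D2 ϕ (x₁, x₂, η x₁ x₂))))) / 2)
          volume 0 L₂ :=
        ((ck.comp (continuous_const.prodMk continuous_id)).div_const 2).intervalIntegrable _ _
      rw [intervalIntegral.integral_add i1 i2]
      rw [intervalIntegral.integral_neg, intervalIntegral.integral_div]
    rw [intervalIntegral.integral_congr (g := fun x₁ =>
        -(∫ x₂ in (0:ℝ)..L₂, (E1 η (x₁, x₂) * W1f ϕ (x₁, x₂, η x₁ x₂)
              + E2 η (x₁, x₂) * W2f ϕ (x₁, x₂, η x₁ x₂) - W3f ϕ (x₁, x₂, η x₁ x₂)))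
          + (∫ x₂ in (0:ℝ)..L₂,
              (η x₁ x₂ - (x₁ * E1 η (x₁, x₂) + x₂ * E2 η (x₁, x₂)))
                * ((D1 ϕ (x₁, x₂, η x₁ x₂)) ^ 2 + (D2 ϕ (x₁, x₂, η x₁ x₂)) ^ 2
                    + (D3 ϕ (x₁, x₂, η x₁ x₂)) ^ 2
                    - 2 * D3 ϕ (x₁, x₂, η x₁ x₂)
                        * (D3 ϕ (x₁, x₂, η x₁ x₂)
                            - (E1 η (x₁, x₂) * D1 ϕ (x₁, x₂, η x₁ x₂)
                                + E2 η (x₁, x₂) * D2 ϕ (x₁, x₂, η x₁ x₂))))) / 2)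
      (fun x₁ _ => inner x₁)]
    have csI : Continuous (fun x₁ : ℝ => ∫ x₂ in (0:ℝ)..L₂,
        (E1 η (x₁, x₂) * W1f ϕ (x₁, x₂, η x₁ x₂)
          + E2 η (x₁, x₂) * W2f ϕ (x₁, x₂, η x₁ x₂) - W3f ϕ (x₁, x₂, η x₁ x₂))) :=
      intervalIntegral.continuous_parametric_intervalIntegral_of_continuous'
        (f := fun x₁ x₂ => (E1 η (x₁, x₂) * W1f ϕ (x₁, x₂, η x₁ x₂)
          + E2 η (x₁, x₂) * W2f ϕ (x₁, x₂, η x₁ x₂) - W3f ϕ (x₁, x₂, η x₁ x₂))) cs _ _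
    have ckI : Continuous (fun x₁ : ℝ => ∫ x₂ in (0:ℝ)..L₂,
        (η x₁ x₂ - (x₁ * E1 η (x₁, x₂) + x₂ * E2 η (x₁, x₂)))
          * ((D1 ϕ (x₁, x₂, η x₁ x₂)) ^ 2 + (D2 ϕ (x₁, x₂, η x₁ x₂)) ^ 2
              + (D3 ϕ (x₁, x₂, η x₁ x₂)) ^ 2
              - 2 * D3 ϕ (x₁, x₂, η x₁ x₂)
                  * (D3 ϕ (x₁, x₂, η x₁ x₂)
                      - (E1 η (x₁, x₂) * D1 ϕ (x₁, x₂, η x₁ x₂)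
                          + E2 η (x₁, x₂) * D2 ϕ (x₁, x₂, η x₁ x₂))))) :=
      intervalIntegral.continuous_parametric_intervalIntegral_of_continuous'
        (f := fun x₁ x₂ => (η x₁ x₂ - (x₁ * E1 η (x₁, x₂) + x₂ * E2 η (x₁, x₂)))
          * ((D1 ϕ (x₁, x₂, η x₁ x₂)) ^ 2 + (D2 ϕ (x₁, x₂, η x₁ x₂)) ^ 2
              + (D3 ϕ (x₁, x₂, η x₁ x₂)) ^ 2
              - 2 * D3 ϕ (x₁, x₂, η x₁ x₂)
                  * (D3 ϕ (x₁, x₂, η x₁ x₂)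
                      - (E1 η (x₁, x₂) * D1 ϕ (x₁, x₂, η x₁ x₂)
                          + E2 η (x₁, x₂) * D2 ϕ (x₁, x₂, η x₁ x₂))))) ck _ _
    rw [intervalIntegral.integral_add (csI.fun_neg.intervalIntegrable _ _)
      ((ckI.div_const 2).intervalIntegrable _ _)]
    rw [intervalIntegral.integral_neg, intervalIntegral.integral_div]
  have hSid : S = T / 2 - (L₁ * A₁ + L₂ * A₂ + h * A₃) / 2 := by
    have cη : Continuous fun x : ℝ × ℝ => η x.1 x.2 := hE.continuous
    have cSurf : Continuous fun x : ℝ × ℝ => ((x.1, x.2, η x.1 x.2) : ℝ × ℝ × ℝ) :=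
      continuous_fst.prodMk (continuous_snd.prodMk cη)
    have cE1 : Continuous (E1 η) := E1_cont hΦ hE
    have cE2 : Continuous (E2 η) := E2_cont hΦ hE
    have cW1 : Continuous (W1f ϕ) := W1f_cont hΦ
    have cW2 : Continuous (W2f ϕ) := W2f_cont hΦ
    have cW3 : Continuous (W3f ϕ) := W3f_cont hΦ
    have cP1 : Continuous (P1f ϕ) := P1f_cont hΦ
    have cP2 : Continuous (P2f ϕ) := P2f_cont hΦ
    have cP3 : Continuous (P3f ϕ) := P3f_cont hΦ
    have cFF : Continuous (FF3 ϕ) := FF3_cont hΦ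
    have cW1s : Continuous fun x : ℝ × ℝ => W1f ϕ (x.1, x.2, η x.1 x.2) := cW1.comp cSurf
    have cW2s : Continuous fun x : ℝ × ℝ => W2f ϕ (x.1, x.2, η x.1 x.2) := cW2.comp cSurf
    have cW3s : Continuous fun x : ℝ × ℝ => W3f ϕ (x.1, x.2, η x.1 x.2) := cW3.comp cSurf
    have cEmb : Continuous fun q : (ℝ × ℝ) × ℝ => ((q.1.1, q.1.2, q.2) : ℝ × ℝ × ℝ) :=
      continuous_fst.fst.prodMk (continuous_fst.snd.prodMk continuous_snd)
    have cIP1 : Continuous fun x : ℝ × ℝ => ∫ y in (-h)..(η x.1 x.2), P1f ϕ (x.1, x.2, y) :=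
      intervalIntegral.continuous_parametric_intervalIntegral_of_continuous
        (f := fun (x : ℝ × ℝ) y => P1f ϕ (x.1, x.2, y)) (cP1.comp cEmb) cη
    have cIP2 : Continuous fun x : ℝ × ℝ => ∫ y in (-h)..(η x.1 x.2), P2f ϕ (x.1, x.2, y) :=
      intervalIntegral.continuous_parametric_intervalIntegral_of_continuous
        (f := fun (x : ℝ × ℝ) y => P2f ϕ (x.1, x.2, y)) (cP2.comp cEmb) cη
    have cIP3 : Continuous fun x : ℝ × ℝ => ∫ y in (-h)..(η x.1 x.2), P3f ϕ (x.1, x.2, y) :=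
      intervalIntegral.continuous_parametric_intervalIntegral_of_continuous
        (f := fun (x : ℝ × ℝ) y => P3f ϕ (x.1, x.2, y)) (cP3.comp cEmb) cη
    have cIFF : Continuous fun x : ℝ × ℝ => ∫ y in (-h)..(η x.1 x.2), FF3 ϕ (x.1, x.2, y) :=
      intervalIntegral.continuous_parametric_intervalIntegral_of_continuous
        (f := fun (x : ℝ × ℝ) y => FF3 ϕ (x.1, x.2, y)) (cFF.comp cEmb) cη
    -- Leibniz + FTC in the x₁ direction
    have ftcP1 : ∀ x₂ : ℝ,
        (∫ t in (0:ℝ)..L₁, ∫ y in (-h)..(η t x₂), P1f ϕ (t, x₂, y))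
          = (∫ y in (-h)..(η L₁ x₂), W1f ϕ (L₁, x₂, y))
            - (∫ y in (-h)..(η 0 x₂), W1f ϕ (0, x₂, y))
            - ∫ t in (0:ℝ)..L₁, E1 η (t, x₂) * W1f ϕ (t, x₂, η t x₂) := by
      intro x₂
      have hline : Continuous fun q : ℝ × ℝ => ((q.1, x₂, q.2) : ℝ × ℝ × ℝ) :=
        continuous_fst.prodMk (continuous_const.prodMk continuous_snd)
      have hder : ∀ t : ℝ, HasDerivAt (fun t => ∫ y in (-h)..(η t x₂), W1f ϕ (t, x₂, y))
          (E1 η (t, x₂) * W1f ϕ (t, x₂, η t x₂)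
            + ∫ y in (-h)..(η t x₂), P1f ϕ (t, x₂, y)) t := fun t =>
        leibniz (g := fun t y => W1f ϕ (t, x₂, y)) (g' := fun t y => P1f ϕ (t, x₂, y))
          (cW1.comp hline) (cP1.comp hline) (fun t y => W1_slice1 hΦ t x₂ y)
          (hasDerivAt_slice1' (hE.differentiable (by norm_num)) t x₂) (-h)
      have cemb1 : Continuous fun t : ℝ => ((t, x₂) : ℝ × ℝ) :=
        continuous_id.prodMk continuous_const
      have ia : IntervalIntegrable (fun t => E1 η (t, x₂) * W1f ϕ (t, x₂, η t x₂))
          volume 0 L₁ := ((cE1.comp cemb1).mul (cW1s.comp cemb1)).intervalIntegrable _ _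
      have ib : IntervalIntegrable (fun t => ∫ y in (-h)..(η t x₂), P1f ϕ (t, x₂, y))
          volume 0 L₁ := (cIP1.comp cemb1).intervalIntegrable _ _
      have hkey := intervalIntegral.integral_eq_sub_of_hasDerivAt
        (f := fun t => ∫ y in (-h)..(η t x₂), W1f ϕ (t, x₂, y))
        (f' := fun t => E1 η (t, x₂) * W1f ϕ (t, x₂, η t x₂)
            + ∫ y in (-h)..(η t x₂), P1f ϕ (t, x₂, y))
        (fun t _ => hder t) (ia.add ib)
      rw [intervalIntegral.integral_add ia ib] at hkey
      linarith
    -- Leibniz + FTC in the x₂ direction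
    have ftcP2 : ∀ x₁ : ℝ,
        (∫ t in (0:ℝ)..L₂, ∫ y in (-h)..(η x₁ t), P2f ϕ (x₁, t, y))
          = (∫ y in (-h)..(η x₁ L₂), W2f ϕ (x₁, L₂, y))
            - (∫ y in (-h)..(η x₁ 0), W2f ϕ (x₁, 0, y))
            - ∫ t in (0:ℝ)..L₂, E2 η (x₁, t) * W2f ϕ (x₁, t, η x₁ t) := by
      intro x₁
      have hline : Continuous fun q : ℝ × ℝ => ((x₁, q.1, q.2) : ℝ × ℝ × ℝ) :=
        continuous_const.prodMk (continuous_fst.prodMk continuous_snd)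
      have hder : ∀ t : ℝ, HasDerivAt (fun t => ∫ y in (-h)..(η x₁ t), W2f ϕ (x₁, t, y))
          (E2 η (x₁, t) * W2f ϕ (x₁, t, η x₁ t)
            + ∫ y in (-h)..(η x₁ t), P2f ϕ (x₁, t, y)) t := fun t =>
        leibniz (g := fun t y => W2f ϕ (x₁, t, y)) (g' := fun t y => P2f ϕ (x₁, t, y))
          (cW2.comp hline) (cP2.comp hline) (fun t y => W2_slice2 hΦ x₁ t y)
          (hasDerivAt_slice2' (hE.differentiable (by norm_num)) x₁ t) (-h)
      have cemb2 : Continuous fun t : ℝ => ((x₁, t) : ℝ × ℝ) :=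
        continuous_const.prodMk continuous_id
      have ia : IntervalIntegrable (fun t => E2 η (x₁, t) * W2f ϕ (x₁, t, η x₁ t))
          volume 0 L₂ := ((cE2.comp cemb2).mul (cW2s.comp cemb2)).intervalIntegrable _ _
      have ib : IntervalIntegrable (fun t => ∫ y in (-h)..(η x₁ t), P2f ϕ (x₁, t, y))
          volume 0 L₂ := (cIP2.comp cemb2).intervalIntegrable _ _
      have hkey := intervalIntegral.integral_eq_sub_of_hasDerivAt
        (f := fun t => ∫ y in (-h)..(η x₁ t), W2f ϕ (x₁, t, y))
        (f' := fun t => E2 η (x₁, t) * W2f ϕ (x₁, t, η x₁ t)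
            + ∫ y in (-h)..(η x₁ t), P2f ϕ (x₁, t, y))
        (fun t _ => hder t) (ia.add ib)
      rw [intervalIntegral.integral_add ia ib] at hkey
      linarith
    -- FTC in the y direction
    have ftc3 : ∀ x₁ x₂ : ℝ,
        (∫ y in (-h)..(η x₁ x₂), P3f ϕ (x₁, x₂, y))
          = W3f ϕ (x₁, x₂, η x₁ x₂) - W3f ϕ (x₁, x₂, -h) := by
      intro x₁ x₂
      have hline : Continuous fun y : ℝ => ((x₁, x₂, y) : ℝ × ℝ × ℝ) :=
        continuous_const.prodMk (continuous_const.prodMk continuous_id)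
      exact intervalIntegral.integral_eq_sub_of_hasDerivAt
        (fun y _ => W3_slice3 hΦ x₁ x₂ y) ((cP3.comp hline).intervalIntegrable _ _)
    -- boundary evaluations
    have bdry1L : ∀ x₂ ∈ Icc (0:ℝ) L₂,
        (∫ y in (-h)..(η L₁ x₂), W1f ϕ (L₁, x₂, y))
          = -(L₁ / 2) * ∫ y in (-h)..(η L₁ x₂), FF3 ϕ (L₁, x₂, y) := by
      intro x₂ hx₂
      have hbound : -h ≤ η L₁ x₂ := by
        have := hηb L₁ ⟨hL₁.le, le_rfl⟩ x₂ hx₂; linarith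
      rw [← intervalIntegral.integral_const_mul]
      apply intervalIntegral.integral_congr
      intro y hy
      rw [uIcc_of_le hbound] at hy
      have hD1 : D1 ϕ (L₁, x₂, y) = 0 := by
        rw [← pX1_eq hΦ]; exact hbc1 L₁ (by simp) x₂ hx₂ y hy
      simp only [W1f, mM3, FF3]
      rw [hD1]; ring
    have bdry10 : ∀ x₂ ∈ Icc (0:ℝ) L₂,
        (∫ y in (-h)..(η 0 x₂), W1f ϕ (0, x₂, y)) = 0 := by
      intro x₂ hx₂
      have hbound : -h ≤ η 0 x₂ := by
        have := hηb 0 ⟨le_rfl, hL₁.le⟩ x₂ hx₂; linarith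
      rw [intervalIntegral.integral_congr (g := fun _ => (0:ℝ)) ?_,
        intervalIntegral.integral_const, smul_zero]
      intro y hy
      rw [uIcc_of_le hbound] at hy
      have hD1 : D1 ϕ (0, x₂, y) = 0 := by
        rw [← pX1_eq hΦ]; exact hbc1 0 (by simp) x₂ hx₂ y hy
      simp only [W1f, mM3, FF3]
      rw [hD1]; ring
    have bdry2L : ∀ x₁ ∈ Icc (0:ℝ) L₁,
        (∫ y in (-h)..(η x₁ L₂), W2f ϕ (x₁, L₂, y))
          = -(L₂ / 2) * ∫ y in (-h)..(η x₁ L₂), FF3 ϕ (x₁, L₂, y) := by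
      intro x₁ hx₁
      have hbound : -h ≤ η x₁ L₂ := by
        have := hηb x₁ hx₁ L₂ ⟨hL₂.le, le_rfl⟩; linarith
      rw [← intervalIntegral.integral_const_mul]
      apply intervalIntegral.integral_congr
      intro y hy
      rw [uIcc_of_le hbound] at hy
      have hD2 : D2 ϕ (x₁, L₂, y) = 0 := by
        rw [← pX2_eq hΦ]; exact hbc2 L₂ (by simp) x₁ hx₁ y hy
      simp only [W2f, mM3, FF3]
      rw [hD2]; ring
    have bdry20 : ∀ x₁ ∈ Icc (0:ℝ) L₁,
        (∫ y in (-h)..(η x₁ 0), W2f ϕ (x₁, 0, y)) = 0 := by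
      intro x₁ hx₁
      have hbound : -h ≤ η x₁ 0 := by
        have := hηb x₁ hx₁ 0 ⟨le_rfl, hL₂.le⟩; linarith
      rw [intervalIntegral.integral_congr (g := fun _ => (0:ℝ)) ?_,
        intervalIntegral.integral_const, smul_zero]
      intro y hy
      rw [uIcc_of_le hbound] at hy
      have hD2 : D2 ϕ (x₁, 0, y) = 0 := by
        rw [← pX2_eq hΦ]; exact hbc2 0 (by simp) x₁ hx₁ y hy
      simp only [W2f, mM3, FF3]
      rw [hD2]; ring
    have bot : ∀ x₁ ∈ Icc (0:ℝ) L₁, ∀ x₂ ∈ Icc (0:ℝ) L₂,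
        W3f ϕ (x₁, x₂, -h) = h / 2 * FF3 ϕ (x₁, x₂, -h) := by
      intro x₁ hx₁ x₂ hx₂
      have hD3 : D3 ϕ (x₁, x₂, -h) = 0 := by
        rw [← pY_eq hΦ]; exact hbot x₁ hx₁ x₂ hx₂
      simp only [W3f, mM3, FF3]
      rw [hD3]; ring
    -- divergence identity under the y-integral
    have divint : ∀ x₁ ∈ Icc (0:ℝ) L₁, ∀ x₂ ∈ Icc (0:ℝ) L₂,
        (∫ y in (-h)..(η x₁ x₂), P1f ϕ (x₁, x₂, y))
          + (∫ y in (-h)..(η x₁ x₂), P2f ϕ (x₁, x₂, y))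
          + (∫ y in (-h)..(η x₁ x₂), P3f ϕ (x₁, x₂, y))
          = -(1 / 2) * ∫ y in (-h)..(η x₁ x₂), FF3 ϕ (x₁, x₂, y) := by
      intro x₁ hx₁ x₂ hx₂
      have hbound : -h ≤ η x₁ x₂ := by
        have := hηb x₁ hx₁ x₂ hx₂; linarith
      have hline : Continuous fun y : ℝ => ((x₁, x₂, y) : ℝ × ℝ × ℝ) :=
        continuous_const.prodMk (continuous_const.prodMk continuous_id)
      have i1 : IntervalIntegrable (fun y => P1f ϕ (x₁, x₂, y)) volume (-h) (η x₁ x₂) :=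
        (cP1.comp hline).intervalIntegrable _ _
      have i2 : IntervalIntegrable (fun y => P2f ϕ (x₁, x₂, y)) volume (-h) (η x₁ x₂) :=
        (cP2.comp hline).intervalIntegrable _ _
      have i3 : IntervalIntegrable (fun y => P3f ϕ (x₁, x₂, y)) volume (-h) (η x₁ x₂) :=
        (cP3.comp hline).intervalIntegrable _ _
      rw [← intervalIntegral.integral_add i1 i2, ← intervalIntegral.integral_add (i1.add i2) i3,
        ← intervalIntegral.integral_const_mul]
      apply intervalIntegral.integral_congr
      intro y hy
      rw [uIcc_of_le hbound] at hy
      have hlapD := lap_translate hΦ hE x₁ x₂ y (hlap x₁ hx₁ x₂ hx₂ y hy)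
      have := div_identity hΦ (x₁, x₂, y) hlapD
      show P1f ϕ (x₁, x₂, y) + P2f ϕ (x₁, x₂, y) + P3f ϕ (x₁, x₂, y) = _
      rw [this]; ring
    -- outer-level continuity
    have cE1W1 : Continuous fun x : ℝ × ℝ => E1 η x * W1f ϕ (x.1, x.2, η x.1 x.2) :=
      cE1.mul cW1s
    have cE2W2 : Continuous fun x : ℝ × ℝ => E2 η x * W2f ϕ (x.1, x.2, η x.1 x.2) :=
      cE2.mul cW2s
    have cFFbot : Continuous fun x : ℝ × ℝ => FF3 ϕ (x.1, x.2, -h) :=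
      cFF.comp (continuous_fst.prodMk (continuous_snd.prodMk continuous_const))
    have cIP1o : Continuous fun x₁ : ℝ =>
        ∫ x₂ in (0:ℝ)..L₂, ∫ y in (-h)..(η x₁ x₂), P1f ϕ (x₁, x₂, y) :=
      intervalIntegral.continuous_parametric_intervalIntegral_of_continuous'
        (f := fun x₁ x₂ => ∫ y in (-h)..(η x₁ x₂), P1f ϕ (x₁, x₂, y)) cIP1 _ _
    have cIP2o : Continuous fun x₁ : ℝ =>
        ∫ x₂ in (0:ℝ)..L₂, ∫ y in (-h)..(η x₁ x₂), P2f ϕ (x₁, x₂, y) :=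
      intervalIntegral.continuous_parametric_intervalIntegral_of_continuous'
        (f := fun x₁ x₂ => ∫ y in (-h)..(η x₁ x₂), P2f ϕ (x₁, x₂, y)) cIP2 _ _
    have cIP3o : Continuous fun x₁ : ℝ =>
        ∫ x₂ in (0:ℝ)..L₂, ∫ y in (-h)..(η x₁ x₂), P3f ϕ (x₁, x₂, y) :=
      intervalIntegral.continuous_parametric_intervalIntegral_of_continuous'
        (f := fun x₁ x₂ => ∫ y in (-h)..(η x₁ x₂), P3f ϕ (x₁, x₂, y)) cIP3 _ _
    have cE1W1o : Continuous fun x₁ : ℝ =>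
        ∫ x₂ in (0:ℝ)..L₂, E1 η (x₁, x₂) * W1f ϕ (x₁, x₂, η x₁ x₂) :=
      intervalIntegral.continuous_parametric_intervalIntegral_of_continuous'
        (f := fun x₁ x₂ => E1 η (x₁, x₂) * W1f ϕ (x₁, x₂, η x₁ x₂)) cE1W1 _ _
    have cE2W2o : Continuous fun x₁ : ℝ =>
        ∫ x₂ in (0:ℝ)..L₂, E2 η (x₁, x₂) * W2f ϕ (x₁, x₂, η x₁ x₂) :=
      intervalIntegral.continuous_parametric_intervalIntegral_of_continuous'
        (f := fun x₁ x₂ => E2 η (x₁, x₂) * W2f ϕ (x₁, x₂, η x₁ x₂)) cE2W2 _ _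
    have cW3so : Continuous fun x₁ : ℝ =>
        ∫ x₂ in (0:ℝ)..L₂, W3f ϕ (x₁, x₂, η x₁ x₂) :=
      intervalIntegral.continuous_parametric_intervalIntegral_of_continuous'
        (f := fun x₁ x₂ => W3f ϕ (x₁, x₂, η x₁ x₂)) cW3s _ _
    -- the total divergence integral
    have hU : (∫ x₁ in (0:ℝ)..L₁, ∫ x₂ in (0:ℝ)..L₂,
        ((∫ y in (-h)..(η x₁ x₂), P1f ϕ (x₁, x₂, y))
          + (∫ y in (-h)..(η x₁ x₂), P2f ϕ (x₁, x₂, y))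
          + (∫ y in (-h)..(η x₁ x₂), P3f ϕ (x₁, x₂, y))))
        = -(1 / 2) * T := by
      rw [hT, ← intervalIntegral.integral_const_mul]
      apply intervalIntegral.integral_congr
      intro x₁ hx₁
      rw [uIcc_of_le hL₁.le] at hx₁
      show _ = -(1/2) * ∫ x₂ in (0:ℝ)..L₂, ∫ y in (-h)..(η x₁ x₂), FF3 ϕ (x₁, x₂, y)
      rw [← intervalIntegral.integral_const_mul]
      apply intervalIntegral.integral_congr
      intro x₂ hx₂
      rw [uIcc_of_le hL₂.le] at hx₂
      exact divint x₁ hx₁ x₂ hx₂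
    -- split it into three pieces
    have hUsplit : (∫ x₁ in (0:ℝ)..L₁, ∫ x₂ in (0:ℝ)..L₂,
        ((∫ y in (-h)..(η x₁ x₂), P1f ϕ (x₁, x₂, y))
          + (∫ y in (-h)..(η x₁ x₂), P2f ϕ (x₁, x₂, y))
          + (∫ y in (-h)..(η x₁ x₂), P3f ϕ (x₁, x₂, y))))
        = (∫ x₁ in (0:ℝ)..L₁, ∫ x₂ in (0:ℝ)..L₂, ∫ y in (-h)..(η x₁ x₂), P1f ϕ (x₁, x₂, y))
          + (∫ x₁ in (0:ℝ)..L₁, ∫ x₂ in (0:ℝ)..L₂, ∫ y in (-h)..(η x₁ x₂), P2f ϕ (x₁, x₂, y))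
          + (∫ x₁ in (0:ℝ)..L₁, ∫ x₂ in (0:ℝ)..L₂, ∫ y in (-h)..(η x₁ x₂), P3f ϕ (x₁, x₂, y)) := by
      have o1 := cIP1o.intervalIntegrable (μ := volume) (0:ℝ) L₁
      have o2 := cIP2o.intervalIntegrable (μ := volume) (0:ℝ) L₁
      have o3 := cIP3o.intervalIntegrable (μ := volume) (0:ℝ) L₁
      rw [← intervalIntegral.integral_add o1 o2, ← intervalIntegral.integral_add (o1.add o2) o3]
      apply intervalIntegral.integral_congr
      intro x₁ _
      simp only []
      have cemb1 : Continuous fun x₂ : ℝ => ((x₁, x₂) : ℝ × ℝ) :=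
        continuous_const.prodMk continuous_id
      have j1 : IntervalIntegrable (fun x₂ : ℝ =>
          ∫ y in (-h)..(η x₁ x₂), P1f ϕ (x₁, x₂, y)) volume 0 L₂ :=
        (cIP1.comp cemb1).intervalIntegrable _ _
      have j2 : IntervalIntegrable (fun x₂ : ℝ =>
          ∫ y in (-h)..(η x₁ x₂), P2f ϕ (x₁, x₂, y)) volume 0 L₂ :=
        (cIP2.comp cemb1).intervalIntegrable _ _
      have j3 : IntervalIntegrable (fun x₂ : ℝ =>
          ∫ y in (-h)..(η x₁ x₂), P3f ϕ (x₁, x₂, y)) volume 0 L₂ :=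
        (cIP3.comp cemb1).intervalIntegrable _ _
      rw [← intervalIntegral.integral_add j1 j2, ← intervalIntegral.integral_add (j1.add j2) j3]
    -- evaluate the P1 piece (needs Fubini)
    have hU1 : (∫ x₁ in (0:ℝ)..L₁, ∫ x₂ in (0:ℝ)..L₂, ∫ y in (-h)..(η x₁ x₂), P1f ϕ (x₁, x₂, y))
        = -(L₁ / 2) * A₁
          - ∫ x₁ in (0:ℝ)..L₁, ∫ x₂ in (0:ℝ)..L₂, E1 η (x₁, x₂) * W1f ϕ (x₁, x₂, η x₁ x₂) := by
      rw [swap_cont (f := fun x₁ x₂ => ∫ y in (-h)..(η x₁ x₂), P1f ϕ (x₁, x₂, y))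
          cIP1 hL₁.le hL₂.le,
        swap_cont (f := fun x₁ x₂ => E1 η (x₁, x₂) * W1f ϕ (x₁, x₂, η x₁ x₂))
          cE1W1 hL₁.le hL₂.le]
      rw [intervalIntegral.integral_congr (g := fun x₂ =>
          -(L₁ / 2) * (∫ y in (-h)..(η L₁ x₂), FF3 ϕ (L₁, x₂, y))
            - ∫ t in (0:ℝ)..L₁, E1 η (t, x₂) * W1f ϕ (t, x₂, η t x₂)) ?_]
      · have m1 : IntervalIntegrable (fun x₂ : ℝ =>
            -(L₁ / 2) * ∫ y in (-h)..(η L₁ x₂), FF3 ϕ (L₁, x₂, y)) volume 0 L₂ :=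
          (continuous_const.mul
            (cIFF.comp (continuous_const.prodMk continuous_id))).intervalIntegrable _ _
        have m2 : IntervalIntegrable (fun x₂ : ℝ =>
            ∫ t in (0:ℝ)..L₁, E1 η (t, x₂) * W1f ϕ (t, x₂, η t x₂)) volume 0 L₂ :=
          (intervalIntegral.continuous_parametric_intervalIntegral_of_continuous'
            (f := fun x₂ t => E1 η (t, x₂) * W1f ϕ (t, x₂, η t x₂))
            (cE1W1.comp (continuous_snd.prodMk continuous_fst)) _ _).intervalIntegrable _ _
        have hsub : (∫ x₂ in (0:ℝ)..L₂,
            (-(L₁ / 2) * (∫ y in (-h)..(η L₁ x₂), FF3 ϕ (L₁, x₂, y))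
              - ∫ t in (0:ℝ)..L₁, E1 η (t, x₂) * W1f ϕ (t, x₂, η t x₂)))
            = (∫ x₂ in (0:ℝ)..L₂, -(L₁ / 2) * ∫ y in (-h)..(η L₁ x₂), FF3 ϕ (L₁, x₂, y))
              - ∫ x₂ in (0:ℝ)..L₂, ∫ t in (0:ℝ)..L₁, E1 η (t, x₂) * W1f ϕ (t, x₂, η t x₂) :=
          intervalIntegral.integral_sub m1 m2
        rw [hsub, intervalIntegral.integral_const_mul, ← hA₁]
      · intro x₂ hx₂
        rw [uIcc_of_le hL₂.le] at hx₂
        simp only []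
        rw [ftcP1 x₂, bdry1L x₂ hx₂, bdry10 x₂ hx₂]
        ring
    -- evaluate the P2 piece
    have hU2 : (∫ x₁ in (0:ℝ)..L₁, ∫ x₂ in (0:ℝ)..L₂, ∫ y in (-h)..(η x₁ x₂), P2f ϕ (x₁, x₂, y))
        = -(L₂ / 2) * A₂
          - ∫ x₁ in (0:ℝ)..L₁, ∫ x₂ in (0:ℝ)..L₂, E2 η (x₁, x₂) * W2f ϕ (x₁, x₂, η x₁ x₂) := by
      rw [intervalIntegral.integral_congr (g := fun x₁ =>
          -(L₂ / 2) * (∫ y in (-h)..(η x₁ L₂), FF3 ϕ (x₁, L₂, y))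
            - ∫ t in (0:ℝ)..L₂, E2 η (x₁, t) * W2f ϕ (x₁, t, η x₁ t)) ?_]
      · have m1 : IntervalIntegrable (fun x₁ : ℝ =>
            -(L₂ / 2) * ∫ y in (-h)..(η x₁ L₂), FF3 ϕ (x₁, L₂, y)) volume 0 L₁ :=
          (continuous_const.mul
            (cIFF.comp (continuous_id.prodMk continuous_const))).intervalIntegrable _ _
        have m2 : IntervalIntegrable (fun x₁ : ℝ =>
            ∫ t in (0:ℝ)..L₂, E2 η (x₁, t) * W2f ϕ (x₁, t, η x₁ t)) volume 0 L₁ :=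
          (intervalIntegral.continuous_parametric_intervalIntegral_of_continuous'
            (f := fun x₁ t => E2 η (x₁, t) * W2f ϕ (x₁, t, η x₁ t)) cE2W2 _ _).intervalIntegrable _ _
        have hsub : (∫ x₁ in (0:ℝ)..L₁,
            (-(L₂ / 2) * (∫ y in (-h)..(η x₁ L₂), FF3 ϕ (x₁, L₂, y))
              - ∫ t in (0:ℝ)..L₂, E2 η (x₁, t) * W2f ϕ (x₁, t, η x₁ t)))
            = (∫ x₁ in (0:ℝ)..L₁, -(L₂ / 2) * ∫ y in (-h)..(η x₁ L₂), FF3 ϕ (x₁, L₂, y))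
              - ∫ x₁ in (0:ℝ)..L₁, ∫ t in (0:ℝ)..L₂, E2 η (x₁, t) * W2f ϕ (x₁, t, η x₁ t) :=
          intervalIntegral.integral_sub m1 m2
        rw [hsub, intervalIntegral.integral_const_mul, ← hA₂]
      · intro x₁ hx₁
        rw [uIcc_of_le hL₁.le] at hx₁
        simp only []
        rw [ftcP2 x₁, bdry2L x₁ hx₁, bdry20 x₁ hx₁]
        ring
    -- evaluate the P3 piece
    have hU3 : (∫ x₁ in (0:ℝ)..L₁, ∫ x₂ in (0:ℝ)..L₂, ∫ y in (-h)..(η x₁ x₂), P3f ϕ (x₁, x₂, y))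
        = (∫ x₁ in (0:ℝ)..L₁, ∫ x₂ in (0:ℝ)..L₂, W3f ϕ (x₁, x₂, η x₁ x₂)) - h / 2 * A₃ := by
      have o1 : IntervalIntegrable (fun x₁ : ℝ =>
          ∫ x₂ in (0:ℝ)..L₂, W3f ϕ (x₁, x₂, η x₁ x₂)) volume 0 L₁ :=
        cW3so.intervalIntegrable _ _
      have o2 : IntervalIntegrable (fun x₁ : ℝ =>
          h / 2 * ∫ x₂ in (0:ℝ)..L₂, FF3 ϕ (x₁, x₂, -h)) volume 0 L₁ :=
        (continuous_const.mul (intervalIntegral.continuous_parametric_intervalIntegral_of_continuous'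
          (f := fun (x₁ x₂ : ℝ) => FF3 ϕ (x₁, x₂, -h)) cFFbot _ _)).intervalIntegrable _ _
      have hsub : (∫ x₁ in (0:ℝ)..L₁,
          ((∫ x₂ in (0:ℝ)..L₂, W3f ϕ (x₁, x₂, η x₁ x₂))
            - h / 2 * ∫ x₂ in (0:ℝ)..L₂, FF3 ϕ (x₁, x₂, -h)))
          = (∫ x₁ in (0:ℝ)..L₁, ∫ x₂ in (0:ℝ)..L₂, W3f ϕ (x₁, x₂, η x₁ x₂))
            - ∫ x₁ in (0:ℝ)..L₁, h / 2 * ∫ x₂ in (0:ℝ)..L₂, FF3 ϕ (x₁, x₂, -h) :=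
        intervalIntegral.integral_sub o1 o2
      rw [hA₃, ← intervalIntegral.integral_const_mul (h / 2), ← hsub]
      apply intervalIntegral.integral_congr
      intro x₁ hx₁
      rw [uIcc_of_le hL₁.le] at hx₁
      have cemb1 : Continuous fun x₂ : ℝ => ((x₁, x₂) : ℝ × ℝ) :=
        continuous_const.prodMk continuous_id
      have j1 : IntervalIntegrable (fun x₂ : ℝ => W3f ϕ (x₁, x₂, η x₁ x₂)) volume 0 L₂ :=
        (cW3s.comp cemb1).intervalIntegrable _ _
      have j2 : IntervalIntegrable (fun x₂ : ℝ => h / 2 * FF3 ϕ (x₁, x₂, -h)) volume 0 L₂ :=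
        (continuous_const.mul (cFFbot.comp cemb1)).intervalIntegrable _ _
      have hsub2 : (∫ x₂ in (0:ℝ)..L₂,
          (W3f ϕ (x₁, x₂, η x₁ x₂) - h / 2 * FF3 ϕ (x₁, x₂, -h)))
          = (∫ x₂ in (0:ℝ)..L₂, W3f ϕ (x₁, x₂, η x₁ x₂))
            - ∫ x₂ in (0:ℝ)..L₂, h / 2 * FF3 ϕ (x₁, x₂, -h) :=
        intervalIntegral.integral_sub j1 j2
      show _ = (∫ x₂ in (0:ℝ)..L₂, W3f ϕ (x₁, x₂, η x₁ x₂))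
            - h / 2 * ∫ x₂ in (0:ℝ)..L₂, FF3 ϕ (x₁, x₂, -h)
      rw [← intervalIntegral.integral_const_mul (h / 2), ← hsub2]
      apply intervalIntegral.integral_congr
      intro x₂ hx₂
      rw [uIcc_of_le hL₂.le] at hx₂
      simp only []
      rw [ftc3 x₁ x₂, bot x₁ hx₁ x₂ hx₂]
    -- split S
    have hSsplit : S
        = (∫ x₁ in (0:ℝ)..L₁, ∫ x₂ in (0:ℝ)..L₂, E1 η (x₁, x₂) * W1f ϕ (x₁, x₂, η x₁ x₂))
          + (∫ x₁ in (0:ℝ)..L₁, ∫ x₂ in (0:ℝ)..L₂, E2 η (x₁, x₂) * W2f ϕ (x₁, x₂, η x₁ x₂))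
          - (∫ x₁ in (0:ℝ)..L₁, ∫ x₂ in (0:ℝ)..L₂, W3f ϕ (x₁, x₂, η x₁ x₂)) := by
      rw [hS]
      have o1 := cE1W1o.intervalIntegrable (μ := volume) (0:ℝ) L₁
      have o2 := cE2W2o.intervalIntegrable (μ := volume) (0:ℝ) L₁
      have o3 := cW3so.intervalIntegrable (μ := volume) (0:ℝ) L₁
      rw [← intervalIntegral.integral_add o1 o2, ← intervalIntegral.integral_sub (o1.add o2) o3]
      apply intervalIntegral.integral_congr
      intro x₁ _
      simp only []
      have cemb1 : Continuous fun x₂ : ℝ => ((x₁, x₂) : ℝ × ℝ) :=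
        continuous_const.prodMk continuous_id
      have j1 : IntervalIntegrable (fun x₂ : ℝ =>
          E1 η (x₁, x₂) * W1f ϕ (x₁, x₂, η x₁ x₂)) volume 0 L₂ :=
        ((cE1.comp cemb1).mul (cW1s.comp cemb1)).intervalIntegrable _ _
      have j2 : IntervalIntegrable (fun x₂ : ℝ =>
          E2 η (x₁, x₂) * W2f ϕ (x₁, x₂, η x₁ x₂)) volume 0 L₂ :=
        ((cE2.comp cemb1).mul (cW2s.comp cemb1)).intervalIntegrable _ _
      have j3 : IntervalIntegrable (fun x₂ : ℝ =>
          W3f ϕ (x₁, x₂, η x₁ x₂)) volume 0 L₂ :=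
        (cW3s.comp cemb1).intervalIntegrable _ _
      rw [← intervalIntegral.integral_add j1 j2, ← intervalIntegral.integral_sub (j1.add j2) j3]
    linarith [hU, hUsplit, hU1, hU2, hU3, hSsplit]
  rw [hLHS, hSid]
  ring
end
end
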